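/- arXiv:2105.08815 — 10 statements merged into one kernel-verified Lean document; each statement's English description precedes it below -/
import Mathlib

section
/- Let B be a boolean algebra, let Filt(B) be the set of all filters of B, let X be the set of proper filters of B ordered by inclusion, and let U be the frame of upward-closed subsets of X. Define i : Filt(B) → U by i(F) = {G ∈ X | F ⊆ G}. Then i({⊤}) is the top of U, i(B) is the bottom of U, and for all filters F, G the smallest filter containing F ∪ G is sent to i(F) ∩ i(G); moreover, for every frame L and every map f : Filt(B) → L satisfying f({⊤}) = ⊤, f(B) = ⊥, and f(smallest filter containing F ∪ G) = f(F) ⊓ f(G) for all filters F, G, there exists a unique frame homomorphism φ : U → L with φ ∘ i = f. Hence U is the free frame on the bounded meet-semilattice Filt(B) ordered by reverse inclusion. -/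
/-- A filter of a boolean algebra: a nonempty, upward-closed subset closed under
binary meets. -/
def IsBFilter {B : Type*} [BooleanAlgebra B] (F : Set B) : Prop :=
  F.Nonempty ∧ IsUpperSet F ∧ ∀ a ∈ F, ∀ b ∈ F, a ⊓ b ∈ F

/-- The set of all filters of `B`, ordered by inclusion (as subsets). -/
abbrev BFilter (B : Type*) [BooleanAlgebra B] := {F : Set B // IsBFilter F}

/-- The set of proper filters of `B`, ordered by inclusion. -/
abbrev ProperBFilter (B : Type*) [BooleanAlgebra B] := {F : Set B // IsBFilter F ∧ ⊥ ∉ F}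

/-- The Alexandroff topology on a preorder: opens are the upward-closed sets. -/
def alexandroff (X : Type*) [Preorder X] : TopologicalSpace X where
  IsOpen := IsUpperSet
  isOpen_univ := isUpperSet_univ
  isOpen_inter := fun _ _ hs ht => hs.inter ht
  isOpen_sUnion := fun _ h => isUpperSet_sUnion h

noncomputable instance (B : Type*) [BooleanAlgebra B] :
    TopologicalSpace (ProperBFilter B) := alexandroff _

/-- The map `i : Filt(B) → U` into the frame of upward-closed subsets of the
poset of proper filters, `i(F) = {G | F ⊆ G}`. -/
def bFilterIota {B : Type*} [BooleanAlgebra B] (F : BFilter B) :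
    TopologicalSpace.Opens (ProperBFilter B) :=
  ⟨{G : ProperBFilter B | F.1 ⊆ G.1}, by
    intro G G' hle hF
    exact le_trans (le_of_eq rfl) (le_trans hF (Subtype.coe_le_coe.mpr hle))⟩

theorem isBFilter_singleton_top {B : Type*} [BooleanAlgebra B] :
    IsBFilter {(⊤ : B)} := by
  refine ⟨⟨⊤, rfl⟩, fun a b hab ha => ?_, fun a ha b hb => ?_⟩
  · simp only [Set.mem_singleton_iff] at ha ⊢
    exact le_antisymm le_top (ha ▸ hab)
  · simp only [Set.mem_singleton_iff] at ha hb ⊢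
    simp [ha, hb]

theorem isBFilter_univ {B : Type*} [BooleanAlgebra B] : IsBFilter (Set.univ : Set B) :=
  ⟨⟨⊤, trivial⟩, fun _ _ _ _ => trivial, fun _ _ _ _ => trivial⟩

theorem isBFilter_sInter {B : Type*} [BooleanAlgebra B] {S : Set (Set B)}
    (h : ∀ H ∈ S, IsBFilter H) : IsBFilter (⋂₀ S) := by
  refine ⟨⟨⊤, ?_⟩, fun a b hab ha => ?_, fun a ha b hb => ?_⟩
  · intro H hH
    obtain ⟨x, hx⟩ := (h H hH).1
    exact (h H hH).2.1 le_top hx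
  · exact fun H hH => (h H hH).2.1 hab (ha H hH)
  · exact fun H hH => (h H hH).2.2 a (ha H hH) b (hb H hH)

/-- The smallest filter containing `F ∪ G`. -/
def bFilterJoin {B : Type*} [BooleanAlgebra B] (F G : BFilter B) : BFilter B :=
  ⟨⋂₀ {H : Set B | IsBFilter H ∧ F.1 ∪ G.1 ⊆ H},
    isBFilter_sInter (fun _ hH => hH.1)⟩

section Aux
variable {B : Type*} [BooleanAlgebra B]

theorem BFilter.top_mem' (F : BFilter B) : (⊤ : B) ∈ F.1 := by
  obtain ⟨x, hx⟩ := F.2.1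
  exact F.2.2.1 le_top hx

theorem bFilterJoin_subset_left (F G : BFilter B) : F.1 ⊆ (bFilterJoin F G).1 :=
  fun x hx H hH => hH.2 (Or.inl hx)

theorem bFilterJoin_subset_right (F G : BFilter B) : G.1 ⊆ (bFilterJoin F G).1 :=
  fun x hx H hH => hH.2 (Or.inr hx)

theorem bFilterJoin_subset {F G : BFilter B} {H : Set B} (hH : IsBFilter H)
    (h1 : F.1 ⊆ H) (h2 : G.1 ⊆ H) : (bFilterJoin F G).1 ⊆ H :=
  fun x hx => hx H ⟨hH, Set.union_subset h1 h2⟩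

theorem bFilterJoin_eq_of_subset {F G : BFilter B} (h : F.1 ⊆ G.1) :
    bFilterJoin F G = G :=
  Subtype.ext (Set.Subset.antisymm
    (bFilterJoin_subset G.2 h (subset_refl _)) (bFilterJoin_subset_right F G))

theorem bfilter_eq_univ_of_bot_mem {F : BFilter B} (h : (⊥ : B) ∈ F.1) :
    F = ⟨Set.univ, isBFilter_univ⟩ :=
  Subtype.ext (Set.eq_univ_of_forall fun b => F.2.2.1 bot_le h)

end Aux


/-- The frame of upward-closed subsets of the poset of proper filters of a boolean
algebra `B` is the free frame on the bounded meet-semilattice of all filters of `B`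
ordered by reverse inclusion: `i` sends the bottom filter `{⊤}` to `⊤`, the improper
filter `B` to `⊥`, joins of filters to meets, and every map `f` from filters to a
frame `L` with the corresponding preservation properties factors uniquely through
`i` via a frame homomorphism. -/

theorem upperSets_of_properFilters_free_frame
    (B : Type*) [BooleanAlgebra B] (L : Type*) [Order.Frame L]
    (f : BFilter B → L)
    (hf_top : f ⟨{(⊤ : B)}, isBFilter_singleton_top⟩ = ⊤)
    (hf_bot : f ⟨Set.univ, isBFilter_univ⟩ = ⊥)
    (hf_inf : ∀ F G : BFilter B, f (bFilterJoin F G) = f F ⊓ f G) :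
    bFilterIota ⟨{(⊤ : B)}, isBFilter_singleton_top⟩ = ⊤ ∧
    bFilterIota ⟨(Set.univ : Set B), isBFilter_univ⟩ = ⊥ ∧
    (∀ F G : BFilter B, bFilterIota (bFilterJoin F G) = bFilterIota F ⊓ bFilterIota G) ∧
    ∃! φ : FrameHom (TopologicalSpace.Opens (ProperBFilter B)) L,
      ⇑φ ∘ bFilterIota = f := by
  classical
  set ι : ProperBFilter B → BFilter B := fun G => ⟨G.1, G.2.1⟩ with hι
  have fmono : ∀ {F G : BFilter B}, F.1 ⊆ G.1 → f G ≤ f F := by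
    intro F G h
    have h2 := hf_inf F G
    rw [bFilterJoin_eq_of_subset h] at h2
    rw [h2]; exact inf_le_left
  set φ₀ : TopologicalSpace.Opens (ProperBFilter B) → L :=
    fun U => ⨆ G ∈ (U : Set (ProperBFilter B)), f (ι G) with hφ₀
  have upper : ∀ (U : TopologicalSpace.Opens (ProperBFilter B)),
      IsUpperSet (U : Set (ProperBFilter B)) := fun U => U.2
  have φ₀mono : Monotone φ₀ := by
    intro U V h
    exact iSup₂_le fun G hG => le_iSup₂ (f := fun G _ => f (ι G)) G (h hG)
  have key : ∀ (U : TopologicalSpace.Opens (ProperBFilter B)) (F : BFilter B),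
      (∀ G : ProperBFilter B, F.1 ⊆ G.1 → G ∈ U) → f F ≤ φ₀ U := by
    intro U F h
    by_cases hb : (⊥ : B) ∈ F.1
    · rw [bfilter_eq_univ_of_bot_mem hb, hf_bot]; exact bot_le
    · exact le_iSup₂ (f := fun G _ => f (ι G)) ⟨F.1, F.2, hb⟩ (h _ (subset_refl _))
  have htop : φ₀ ⊤ = ⊤ := by
    refine le_antisymm le_top ?_
    rw [← hf_top]
    exact key ⊤ _ fun G _ => trivial
  have hinf : ∀ U V, φ₀ (U ⊓ V) = φ₀ U ⊓ φ₀ V := by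
    intro U V
    refine le_antisymm (le_inf (φ₀mono inf_le_left) (φ₀mono inf_le_right)) ?_
    calc φ₀ U ⊓ φ₀ V = ⨆ G ∈ (U : Set (ProperBFilter B)),
          ⨆ H ∈ (V : Set (ProperBFilter B)), f (ι G) ⊓ f (ι H) := by
            rw [hφ₀]
            simp_rw [iSup_inf_eq, inf_iSup_eq]
      _ ≤ φ₀ (U ⊓ V) := by
            refine iSup₂_le fun G hG => iSup₂_le fun H hH => ?_
            rw [← hf_inf]
            refine key _ _ fun G' hG' => ?_
            have hGG' : G ≤ G' :=
              fun x hx => hG' ((bFilterJoin_subset_left (ι G) (ι H)) hx)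
            have hHG' : H ≤ G' :=
              fun x hx => hG' ((bFilterJoin_subset_right (ι G) (ι H)) hx)
            exact ⟨upper U hGG' hG, upper V hHG' hH⟩
  have hsSup : ∀ S : Set (TopologicalSpace.Opens (ProperBFilter B)),
      φ₀ (sSup S) = sSup (φ₀ '' S) := by
    intro S
    refine le_antisymm ?_ ?_
    · refine iSup₂_le fun G hG => ?_
      obtain ⟨U, hU, hGU⟩ := TopologicalSpace.Opens.mem_sSup.mp hG
      exact le_trans (le_iSup₂ (f := fun G _ => f (ι G)) G hGU) (le_sSup ⟨U, hU, rfl⟩)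
    · refine sSup_le ?_
      rintro x ⟨U, hU, rfl⟩
      exact φ₀mono (le_sSup hU)
  have hcomm : ∀ F : BFilter B, φ₀ (bFilterIota F) = f F := by
    intro F
    refine le_antisymm (iSup₂_le fun G hG => fmono hG) (key _ F fun G hG => hG)
  refine ⟨?_, ?_, ?_, ?_⟩
  · ext G
    refine iff_of_true ?_ trivial
    show {(⊤ : B)} ⊆ G.1
    rw [Set.singleton_subset_iff]
    exact BFilter.top_mem' ⟨G.1, G.2.1⟩
  · ext G
    refine iff_of_false ?_ (by intro h; exact h)
    intro h
    exact G.2.2 (h (Set.mem_univ ⊥))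
  · intro F G
    ext G'
    constructor
    · intro h
      exact ⟨subset_trans (bFilterJoin_subset_left F G) h,
        subset_trans (bFilterJoin_subset_right F G) h⟩
    · rintro ⟨h1, h2⟩
      exact bFilterJoin_subset G'.2.1 h1 h2
  · refine ⟨⟨⟨⟨φ₀, hinf⟩, htop⟩, hsSup⟩, funext hcomm, ?_⟩
    intro ψ hψ
    ext U
    have hU : U = ⨆ G ∈ (U : Set (ProperBFilter B)), bFilterIota (ι G) := by
      ext G'
      simp only [SetLike.mem_coe, TopologicalSpace.Opens.mem_iSup]
      constructor
      · intro h
        exact ⟨G', h, show (ι G').1 ⊆ G'.1 from subset_refl _⟩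
      · rintro ⟨G, hG, hsub⟩
        exact upper U (show (ι G).1 ⊆ G'.1 from hsub) hG
    calc ψ U = ψ (⨆ G ∈ (U : Set (ProperBFilter B)), bFilterIota (ι G)) := by rw [← hU]
      _ = ⨆ G ∈ (U : Set (ProperBFilter B)), ψ (bFilterIota (ι G)) := by
          simp_rw [map_iSup]
      _ = φ₀ U := by
          rw [hφ₀]
          refine iSup_congr fun G => iSup_congr fun _ => ?_
          exact congrFun hψ (ι G)
end

section
/- Let B be a boolean algebra, X the set of proper filters of B ordered by inclusion, and let e(b) = {G ∈ X | b ∈ G}, an upward-closed subset of X. Then in the frame of upward-closed subsets of X, the pseudocomplement of e(b) equals e(¬b); consequently e(b) is a regular element of this frame, i.e., e(b)** = e(b). -/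
/-- The map `e : B → ` (frame of upward-closed subsets of proper filters of `B`),
`e(b) = {G | b ∈ G}`. -/
def bAlgIota {B : Type*} [BooleanAlgebra B] (b : B) :
    TopologicalSpace.Opens (ProperBFilter B) :=
  ⟨{G : ProperBFilter B | b ∈ G.1}, by
    intro G G' hle hb
    exact Subtype.coe_le_coe.mpr hle hb⟩

/-- The pseudocomplement `u* = ⨆ {v | v ⊓ u = ⊥}` of an element of a frame. -/
def framePseudo {L : Type*} [Order.Frame L] (u : L) : L := sSup {v | v ⊓ u = ⊥}

lemma pseudo_bAlgIota_aux {B : Type*} [BooleanAlgebra B] (b : B) :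
    framePseudo (bAlgIota b) = bAlgIota bᶜ := by
  apply le_antisymm
  · apply sSup_le
    rintro v (hv : v ⊓ bAlgIota b = ⊥)
    intro G hG
    by_cases h : ∃ g ∈ G.1, g ⊓ b ≤ ⊥
    · obtain ⟨g, hgG, hg⟩ := h
      have hle : g ≤ bᶜ :=
        le_compl_iff_disjoint_right.mpr (disjoint_iff.mpr (le_bot_iff.mp hg))
      exact G.2.1.2.1 hle hgG
    · push_neg at h
      set F' : Set B := {x | ∃ g ∈ G.1, g ⊓ b ≤ x} with hF'
      obtain ⟨g0, hg0⟩ := G.2.1.1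
      have hbF : b ∈ F' := ⟨g0, hg0, inf_le_right⟩
      have hFfilter : IsBFilter F' := by
        refine ⟨⟨b, hbF⟩, ?_, ?_⟩
        · rintro x y hxy ⟨g, hg, hle⟩
          exact ⟨g, hg, hle.trans hxy⟩
        · rintro x ⟨g1, h1, hl1⟩ y ⟨g2, h2, hl2⟩
          refine ⟨g1 ⊓ g2, G.2.1.2.2 g1 h1 g2 h2, le_inf ?_ ?_⟩
          · exact le_trans (inf_le_inf_right b inf_le_left) hl1
          · exact le_trans (inf_le_inf_right b inf_le_right) hl2
      have hFproper : ⊥ ∉ F' := by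
        rintro ⟨g, hg, hle⟩
        exact h g hg hle
      let F : ProperBFilter B := ⟨F', hFfilter, hFproper⟩
      have hGF : G ≤ F := fun x hx => ⟨x, hx, inf_le_left⟩
      have hFv : F ∈ v := v.2 hGF hG
      have hmem : F ∈ (v ⊓ bAlgIota b : TopologicalSpace.Opens (ProperBFilter B)) :=
        ⟨hFv, hbF⟩
      rw [hv] at hmem
      exact absurd hmem (by rw [TopologicalSpace.Opens.mem_mk]; simp)
  · apply le_sSup
    show bAlgIota bᶜ ⊓ bAlgIota b = ⊥
    apply le_antisymm _ bot_le
    rintro G ⟨hc, hb⟩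
    exact absurd (G.2.1.2.2 _ hc _ hb) (by simpa using G.2.2)

/-- In the frame of upward-closed subsets of the poset of proper filters of a
boolean algebra `B`, the pseudocomplement of `e(b)` is `e(¬ b)`; consequently
`e(b)` is a regular element, i.e. `e(b)** = e(b)`. -/
theorem pseudo_bAlgIota (B : Type*) [BooleanAlgebra B] (b : B) :
    framePseudo (bAlgIota b) = bAlgIota bᶜ ∧
    framePseudo (framePseudo (bAlgIota b)) = bAlgIota b := by
  refine ⟨pseudo_bAlgIota_aux b, ?_⟩
  rw [pseudo_bAlgIota_aux, pseudo_bAlgIota_aux, compl_compl]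
end

section
/- Let B be a boolean algebra, X the set of proper filters of B ordered by inclusion, and e(b) = {G ∈ X | b ∈ G}, an upward-closed subset of X. For every subset S ⊆ B, if ⋂{e(s) | s ∈ S} = ∅ (that is, the infimum of e[S] in the frame of upward-closed subsets of X is the bottom), then there exist finitely many s₁, …, sₙ ∈ S with s₁ ⊓ ⋯ ⊓ sₙ = ⊥ in B. Hence the embedding e of B into the booleanization of the frame of upper sets of X is compact. -/
/-- If a subset `S` of a boolean algebra `B` satisfies `⋂ {e(s) | s ∈ S} = ∅` in
the frame of upward-closed subsets of the poset of proper filters of `B`, then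
some finite subset of `S` has meet `⊥`. Hence the embedding `e` of `B` into the
booleanization of this frame is compact. -/
theorem bAlgIota_compact (B : Type*) [BooleanAlgebra B] (S : Set B)
    (h : (⋂ s ∈ S, (bAlgIota s : Set (ProperBFilter B))) = ∅) :
    ∃ t : Finset B, ↑t ⊆ S ∧ t.inf id = ⊥ := by
  classical
  by_contra hc
  push_neg at hc
  set F : Set B := {b | ∃ t : Finset B, ↑t ⊆ S ∧ t.inf id ≤ b} with hF
  have hFilter : IsBFilter F := by
    refine ⟨⟨⊤, ∅, by simp⟩, ?_, ?_⟩
    · intro a b hab ⟨t, htS, ht⟩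
      exact ⟨t, htS, ht.trans hab⟩
    · rintro a ⟨t, htS, ht⟩ b ⟨u, huS, hu⟩
      refine ⟨t ∪ u, ?_, le_inf ?_ ?_⟩
      · push_cast; exact Set.union_subset htS huS
      · exact le_trans (Finset.inf_mono Finset.subset_union_left) ht
      · exact le_trans (Finset.inf_mono Finset.subset_union_right) hu
  have hProper : ⊥ ∉ F := by
    rintro ⟨t, htS, ht⟩
    exact hc t htS (le_bot_iff.mp ht)
  have hmem : (⟨F, hFilter, hProper⟩ : ProperBFilter B) ∈
      ⋂ s ∈ S, (bAlgIota s : Set (ProperBFilter B)) := by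
    simp only [Set.mem_iInter]
    intro s hs
    exact ⟨{s}, by simpa, by simp⟩
  rw [h] at hmem
  exact hmem
end

section
/- Let A be a bal-algebra and I an ℓ-ideal of A. Then the set K = {x ∈ A | (n·|x| − 1)⁺ ∈ I for all integers n ≥ 1} is an archimedean ℓ-ideal of A containing I, and every archimedean ℓ-ideal of A containing I contains K. That is, ar(I) = {x ∈ A | (n·|x| − 1)⁺ ∈ I for all n ≥ 1}. -/
/-- A bounded archimedean ℓ-algebra (bal-algebra): a commutative ℝ-algebra with a
lattice order compatible with addition and multiplication, in which the algebra
map from ℝ is order-preserving, `1` is a strong order unit, and the order is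
archimedean. -/
structure IsBal (A : Type*) [CommRing A] [Lattice A] [Algebra ℝ A] : Prop where
  add_le_add_right : ∀ a b : A, a ≤ b → ∀ c : A, a + c ≤ b + c
  mul_nonneg : ∀ a b : A, 0 ≤ a → 0 ≤ b → 0 ≤ a * b
  algebraMap_mono : Monotone (algebraMap ℝ A)
  strong_unit : ∀ a : A, ∃ n : ℕ, 1 ≤ n ∧ a ≤ n • (1 : A)
  arch : ∀ a b : A, (∀ n : ℕ, 1 ≤ n → n • a ≤ b) → a ≤ 0

/-- An ℓ-ideal: a ring ideal `I` such that `|a| ≤ |b|` and `b ∈ I` imply `a ∈ I`,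
where `|a| = a ⊔ (-a)`. -/
def IsLIdeal {A : Type*} [CommRing A] [Lattice A] (I : Ideal A) : Prop :=
  ∀ a b : A, b ∈ I → a ⊔ -a ≤ b ⊔ -b → a ∈ I

/-- An archimedean ℓ-ideal: whenever `(n • a - b)⁺ ∈ I` for every integer `n ≥ 1`,
also `a⁺ ∈ I`, where `x⁺ = x ⊔ 0`. -/
def IsArchLIdeal {A : Type*} [CommRing A] [Lattice A] (I : Ideal A) : Prop :=
  ∀ a b : A, (∀ n : ℕ, 1 ≤ n → (n • a - b) ⊔ 0 ∈ I) → a ⊔ 0 ∈ I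

/-- The archimedean hull of a subset `S`: the intersection of all archimedean
ℓ-ideals containing `S`. -/
def archHull {A : Type*} [CommRing A] [Lattice A] (S : Set A) : Ideal A :=
  sInf {I : Ideal A | IsLIdeal I ∧ IsArchLIdeal I ∧ S ⊆ ↑I}

section BalAuxSection
variable {A : Type*} [CommRing A] [Lattice A] [Algebra ℝ A]
set_option linter.unusedSectionVars false


namespace BalAux

variable {A : Type*} [CommRing A] [Lattice A] [Algebra ℝ A]

theorem le_iff_sub (hA : IsBal A) {a b : A} : a ≤ b ↔ 0 ≤ b - a := by
  constructor
  · intro h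
    have := hA.add_le_add_right a b h (-a)
    simpa [sub_eq_add_neg] using this
  · intro h
    have := hA.add_le_add_right 0 (b - a) h a
    simpa using this

theorem add_le_add (hA : IsBal A) {a b c d : A} (h1 : a ≤ b) (h2 : c ≤ d) :
    a + c ≤ b + d := by
  rw [le_iff_sub hA] at h1 h2 ⊢
  have h0 := hA.add_le_add_right 0 (b - a) h1 (d - c)
  have h3 : (0:A) ≤ (b - a) + (d - c) := le_trans h2 (by simpa using h0)
  convert h3 using 1
  ring

theorem smul_nonneg (hA : IsBal A) {r : ℝ} (hr : 0 ≤ r) {a : A} (ha : 0 ≤ a) :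
    0 ≤ r • a := by
  rw [Algebra.smul_def]
  exact hA.mul_nonneg _ _ (by simpa using hA.algebraMap_mono hr) ha

theorem smul_mono (hA : IsBal A) {r : ℝ} (hr : 0 ≤ r) {a b : A} (h : a ≤ b) :
    r • a ≤ r • b := by
  rw [le_iff_sub hA] at h ⊢
  rw [← smul_sub]
  exact smul_nonneg hA hr h

theorem half (hA : IsBal A) {a : A} (h : 0 ≤ a + a) : 0 ≤ a := by
  have h2 : ((2:ℝ)⁻¹) • (a + a) = a := by
    rw [smul_add, ← add_smul]
    norm_num
  calc (0:A) = (2:ℝ)⁻¹ • (0:A) := by simp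
  _ ≤ (2:ℝ)⁻¹ • (a + a) := smul_mono hA (by norm_num) h
  _ = a := h2

theorem le_of_two (hA : IsBal A) {a b : A} (h : a + a ≤ b + b) : a ≤ b := by
  rw [le_iff_sub hA] at h ⊢
  apply half hA
  have : (b - a) + (b - a) = (b + b) - (a + a) := by ring
  rw [this]; exact h

theorem abs_nonneg (hA : IsBal A) (a : A) : 0 ≤ a ⊔ -a := by
  apply half hA
  have h1 : a + -a ≤ (a ⊔ -a) + -a := hA.add_le_add_right _ _ le_sup_left _
  have h2 : (a ⊔ -a) + -a ≤ (a ⊔ -a) + (a ⊔ -a) :=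
    add_le_add hA le_rfl le_sup_right
  simpa using le_trans h1 h2

theorem neg_nonpos (hA : IsBal A) {a : A} (ha : 0 ≤ a) : -a ≤ 0 := by
  rw [le_iff_sub hA]; simpa using ha

theorem abs_of_nonneg (hA : IsBal A) {a : A} (ha : 0 ≤ a) : a ⊔ -a = a :=
  sup_eq_left.mpr (le_trans (neg_nonpos hA ha) ha)

theorem one_nonneg (hA : IsBal A) : (0:A) ≤ 1 := by
  simpa using hA.algebraMap_mono (zero_le_one (α := ℝ))

theorem mem_of_le (hA : IsBal A) {I : Ideal A} (hI : IsLIdeal I) {a b : A}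
    (ha : 0 ≤ a) (hab : a ≤ b) (hb : b ∈ I) : a ∈ I := by
  apply hI a b hb
  rw [abs_of_nonneg hA ha, abs_of_nonneg hA (le_trans ha hab)]
  exact hab

theorem abs_add (hA : IsBal A) (a b : A) :
    (a + b) ⊔ -(a + b) ≤ (a ⊔ -a) + (b ⊔ -b) := by
  apply sup_le
  · exact add_le_add hA le_sup_left le_sup_left
  · rw [neg_add]
    exact add_le_add hA le_sup_right le_sup_right

theorem nsmul_eq (n : ℕ) (a : A) : n • a = (n : ℝ) • a :=
  (Nat.cast_smul_eq_nsmul ℝ n a).symm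

theorem nsmul_mono (hA : IsBal A) (n : ℕ) {a b : A} (h : a ≤ b) :
    n • a ≤ n • b := by
  rw [nsmul_eq, nsmul_eq]
  exact smul_mono hA (by positivity) h

theorem nsmul_nonneg (hA : IsBal A) (n : ℕ) {a : A} (h : 0 ≤ a) :
    0 ≤ n • a := by simpa using nsmul_mono hA n h

theorem mul_le_mul_right (hA : IsBal A) {a b c : A} (h : a ≤ b) (hc : 0 ≤ c) :
    a * c ≤ b * c := by
  rw [le_iff_sub hA] at h ⊢
  rw [← sub_mul]
  exact hA.mul_nonneg _ _ h hc

theorem abs_mul (hA : IsBal A) (a b : A) :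
    (a * b) ⊔ -(a * b) ≤ (a ⊔ -a) * (b ⊔ -b) := by
  set u := a ⊔ -a with hu
  set v := b ⊔ -b with hv
  have hua : 0 ≤ u - a := by rw [← le_iff_sub hA]; exact le_sup_left
  have hua' : 0 ≤ u + a := by
    have : 0 ≤ u - -a := by rw [← le_iff_sub hA]; exact le_sup_right
    simpa [sub_neg_eq_add] using this
  have hvb : 0 ≤ v - b := by rw [← le_iff_sub hA]; exact le_sup_left
  have hvb' : 0 ≤ v + b := by
    have : 0 ≤ v - -b := by rw [← le_iff_sub hA]; exact le_sup_right
    simpa [sub_neg_eq_add] using this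
  apply sup_le
  · rw [le_iff_sub hA]
    apply half hA
    have key : (u * v - a * b) + (u * v - a * b)
        = (u - a) * (v + b) + (u + a) * (v - b) := by ring
    rw [key]
    exact le_trans (hA.mul_nonneg _ _ hua hvb')
      (by simpa using add_le_add hA (le_refl ((u-a)*(v+b))) (hA.mul_nonneg _ _ hua' hvb))
  · rw [le_iff_sub hA]
    apply half hA
    have key : (u * v - -(a * b)) + (u * v - -(a * b))
        = (u - a) * (v - b) + (u + a) * (v + b) := by ring
    rw [key]
    exact le_trans (hA.mul_nonneg _ _ hua hvb)
      (by simpa using add_le_add hA (le_refl ((u-a)*(v-b))) (hA.mul_nonneg _ _ hua' hvb'))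



theorem pos_nonneg (a : A) : (0:A) ≤ a ⊔ 0 := le_sup_right

theorem pos_mono {a b : A} (h : a ≤ b) : a ⊔ 0 ≤ b ⊔ 0 := sup_le_sup_right h 0

theorem sub_one_mono (hA : IsBal A) {a b : A} (h : a ≤ b) : a - 1 ≤ b - 1 := by
  rw [le_iff_sub hA] at h ⊢
  convert h using 1; ring

def balK (hA : IsBal A) (I : Ideal A) (hI : IsLIdeal I) : Ideal A where
  carrier := {x : A | ∀ n : ℕ, 1 ≤ n → (n • (x ⊔ -x) - 1) ⊔ 0 ∈ I}
  zero_mem' := by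
    intro n hn
    simp only [neg_zero, sup_idem, smul_zero, zero_sub]
    rw [sup_eq_right.mpr (neg_nonpos hA (one_nonneg hA))]
    exact I.zero_mem
  add_mem' := by
    intro x y hx hy n hn
    have hx2 := hx (2 * n) (by omega)
    have hy2 := hy (2 * n) (by omega)
    set u := x ⊔ -x
    set v := y ⊔ -y
    set s := ((2 * n) • u - 1) ⊔ 0 + ((2 * n) • v - 1) ⊔ 0 with hs
    have hsI : s ∈ I := I.add_mem hx2 hy2
    have hs0 : 0 ≤ s := by
      simpa only [add_zero] using add_le_add hA (pos_nonneg ((2*n) • u - 1)) (pos_nonneg ((2*n) • v - 1))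
    have h1 : n • ((x + y) ⊔ -(x + y)) - 1 ≤ s := by
      apply le_of_two hA
      have e1 : (2 * n) • u - 1 ≤ s := by
        simpa only [add_zero] using add_le_add hA
          (le_sup_left : (2*n) • u - 1 ≤ ((2*n) • u - 1) ⊔ 0) (pos_nonneg ((2*n) • v - 1))
      have e2 : (2 * n) • v - 1 ≤ s := by
        simpa only [zero_add] using add_le_add hA (pos_nonneg ((2*n) • u - 1))
          (le_sup_left : (2*n) • v - 1 ≤ ((2*n) • v - 1) ⊔ 0)
      have e3 : ((2*n) • u - 1) + ((2*n) • v - 1) ≤ s + s := add_le_add hA e1 e2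
      refine le_trans ?_ e3
      have e4 : n • ((x + y) ⊔ -(x + y)) ≤ n • (u + v) := nsmul_mono hA n (abs_add hA x y)
      have e5 := add_le_add hA (sub_one_mono hA e4) (sub_one_mono hA e4)
      refine le_trans e5 ?_
      have e6 : (n • (u + v) - 1) + (n • (u + v) - 1)
          = ((2*n) • u - 1) + ((2*n) • v - 1) := by
        rw [two_mul, add_nsmul, add_nsmul, smul_add]
        abel
      rw [e6]
    refine mem_of_le hA hI (pos_nonneg _) ?_ hsI
    exact sup_le h1 hs0
  smul_mem' := by
    intro c x hx n hn
    obtain ⟨m, hm1, hm⟩ := hA.strong_unit (c ⊔ -c)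
    have hxnm := hx (n * m) (Nat.one_le_iff_ne_zero.mpr (by positivity))
    set e := ((n * m) • (x ⊔ -x) - 1) ⊔ 0 with he
    have h1 : (c • x) ⊔ -(c • x) ≤ (c ⊔ -c) * (x ⊔ -x) := by
      simpa [smul_eq_mul] using abs_mul hA c x
    have h2 : (c ⊔ -c) * (x ⊔ -x) ≤ (m • (1:A)) * (x ⊔ -x) :=
      mul_le_mul_right hA hm (abs_nonneg hA x)
    have h3 : (m • (1:A)) * (x ⊔ -x) = m • (x ⊔ -x) := by
      rw [nsmul_eq_mul, nsmul_eq_mul, mul_one]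
    have h4 : n • ((c • x) ⊔ -(c • x)) ≤ (n * m) • (x ⊔ -x) := by
      rw [← smul_smul]
      exact nsmul_mono hA n (le_trans h1 (h3 ▸ h2))
    refine mem_of_le hA hI (pos_nonneg _) ?_ hxnm
    refine sup_le (le_trans (sub_one_mono hA h4) le_sup_left) (pos_nonneg _)




theorem mem_balK (hA : IsBal A) (I : Ideal A) (hI : IsLIdeal I) {x : A} :
    x ∈ balK hA I hI ↔ ∀ n : ℕ, 1 ≤ n → (n • (x ⊔ -x) - 1) ⊔ 0 ∈ I := Iff.rfl

theorem balK_lideal (hA : IsBal A) (I : Ideal A) (hI : IsLIdeal I) :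
    IsLIdeal (balK hA I hI) := by
  intro a b hb hab
  rw [mem_balK] at hb ⊢
  intro n hn
  refine mem_of_le hA hI (pos_nonneg _) ?_ (hb n hn)
  exact pos_mono (sub_one_mono hA (nsmul_mono hA n hab))

theorem balK_le (hA : IsBal A) (I : Ideal A) (hI : IsLIdeal I) :
    I ≤ balK hA I hI := by
  intro x hx
  rw [mem_balK]
  intro n hn
  have habs : x ⊔ -x ∈ I := by
    apply hI (x ⊔ -x) x hx
    rw [abs_of_nonneg hA (abs_nonneg hA x)]
  have hsm : n • (x ⊔ -x) ∈ I := by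
    rw [nsmul_eq_mul]
    exact I.mul_mem_left _ habs
  refine mem_of_le hA hI (pos_nonneg _) ?_ hsm
  apply sup_le
  · rw [le_iff_sub hA]
    simpa using one_nonneg hA
  · exact nsmul_nonneg hA n (abs_nonneg hA x)

theorem balK_least (hA : IsBal A) (I : Ideal A) (hI : IsLIdeal I)
    (J : Ideal A) (hJl : IsLIdeal J) (hJa : IsArchLIdeal J) (hIJ : I ≤ J) :
    balK hA I hI ≤ J := by
  intro x hx
  rw [mem_balK] at hx
  have habs : (x ⊔ -x) ⊔ 0 ∈ J := hJa (x ⊔ -x) 1 (fun n hn => hIJ (hx n hn))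
  rw [sup_eq_left.mpr (abs_nonneg hA x)] at habs
  apply hJl x (x ⊔ -x) habs
  rw [abs_of_nonneg hA (abs_nonneg hA x)]

theorem balK_arch (hA : IsBal A) (I : Ideal A) (hI : IsLIdeal I) :
    IsArchLIdeal (balK hA I hI) := by
  intro a b h
  rw [mem_balK]
  intro m hm
  rw [abs_of_nonneg hA (pos_nonneg a)]
  obtain ⟨k, hk1, hk⟩ := hA.strong_unit b
  set n := 2 * m * k with hn
  have hn1 : 1 ≤ n := Nat.one_le_iff_ne_zero.mpr (by positivity)
  have hc := (mem_balK hA I hI).mp (h n hn1)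
  set c := (n • a - b) ⊔ 0 with hcdef
  have hc0 : 0 ≤ c := pos_nonneg _
  have hd0 : (c - 1) ⊔ 0 ∈ I := by
    have := hc 1 le_rfl
    rwa [abs_of_nonneg hA hc0, one_smul] at this
  have hnR : ((n : ℕ) : ℝ) = 2 * (m:ℝ) * (k:ℝ) := by rw [hn]; push_cast; ring
  have hmR : (1:ℝ) ≤ (m:ℝ) := by exact_mod_cast hm
  have hkR : (1:ℝ) ≤ (k:ℝ) := by exact_mod_cast hk1
  have hnpos : (0:ℝ) < (n:ℝ) := by rw [hnR]; nlinarith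
  -- n • a ≤ c + k • 1
  have h1 : n • a ≤ c + k • (1:A) := by
    have t1 : n • a - b ≤ c := le_sup_left
    have t2 := add_le_add hA t1 hk
    simpa [sub_add_cancel] using t2
  rw [nsmul_eq n a, nsmul_eq k (1:A)] at h1
  have h2 : a ≤ ((n:ℝ))⁻¹ • (c + (k:ℝ) • (1:A)) := by
    have := smul_mono hA (inv_nonneg.mpr hnpos.le) h1
    rwa [smul_smul, inv_mul_cancel₀ hnpos.ne', one_smul] at this
  have hq : ((n:ℝ))⁻¹ • (c + (k:ℝ) • (1:A))
      = ((n:ℝ))⁻¹ • c + ((k:ℝ)/(n:ℝ)) • (1:A) := by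
    rw [smul_add, smul_smul, inv_mul_eq_div]
  rw [hq] at h2
  have hq0 : (0:A) ≤ ((n:ℝ))⁻¹ • c + ((k:ℝ)/(n:ℝ)) • (1:A) := by
    simpa using add_le_add hA (smul_nonneg hA (inv_nonneg.mpr hnpos.le) hc0)
      (smul_nonneg hA (by positivity) (one_nonneg hA))
  have hp2 : a ⊔ 0 ≤ ((n:ℝ))⁻¹ • c + ((k:ℝ)/(n:ℝ)) • (1:A) := sup_le h2 hq0
  have hm2 := smul_mono hA (by positivity : (0:ℝ) ≤ (m:ℝ)) hp2
  have hmq : (m:ℝ) • (((n:ℝ))⁻¹ • c + ((k:ℝ)/(n:ℝ)) • (1:A))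
      = ((m:ℝ)/(n:ℝ)) • c + ((m:ℝ)*(k:ℝ)/(n:ℝ)) • (1:A) := by
    rw [smul_add, smul_smul, smul_smul,
      show (m:ℝ) * ((n:ℝ))⁻¹ = (m:ℝ)/(n:ℝ) from (div_eq_mul_inv _ _).symm,
      show (m:ℝ) * ((k:ℝ)/(n:ℝ)) = (m:ℝ)*(k:ℝ)/(n:ℝ) from (mul_div_assoc _ _ _).symm]
  rw [hmq] at hm2
  have hhalf : (m:ℝ)*(k:ℝ)/(n:ℝ) = 1/2 := by
    rw [hnR]
    have hm0 : (m:ℝ) ≠ 0 := by positivity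
    have hk0 : (k:ℝ) ≠ 0 := by positivity
    field_simp
  rw [hhalf] at hm2
  have hc' : ((m:ℝ)/(n:ℝ)) • c ≤ ((1:ℝ)/2) • c := by
    rw [le_iff_sub hA, ← sub_smul]
    refine smul_nonneg hA ?_ hc0
    rw [hnR, sub_nonneg, div_le_div_iff₀ (by nlinarith) (by norm_num)]
    nlinarith
  have hm3 : (m:ℝ) • (a ⊔ 0) ≤ ((1:ℝ)/2) • c + ((1:ℝ)/2) • (1:A) :=
    le_trans hm2 (add_le_add hA hc' le_rfl)
  have hD : (m:ℝ) • (a ⊔ 0) - 1 ≤ ((1:ℝ)/2) • (c - 1) := by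
    have key : ((1:ℝ)/2) • (c - 1) + 1 = ((1:ℝ)/2) • c + ((1:ℝ)/2) • (1:A) := by
      rw [smul_sub]
      module
    rw [le_iff_sub hA]
    have := (le_iff_sub hA).mp (key ▸ hm3)
    convert this using 1
    abel
  have hE : ((1:ℝ)/2) • (c - 1) ≤ ((1:ℝ)/2) • ((c - 1) ⊔ 0) :=
    smul_mono hA (by norm_num) le_sup_left
  have hF : ((1:ℝ)/2) • ((c - 1) ⊔ 0) ∈ I := by
    rw [Algebra.smul_def]
    exact I.mul_mem_left _ hd0
  have hG : (0:A) ≤ ((1:ℝ)/2) • ((c - 1) ⊔ 0) :=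
    smul_nonneg hA (by norm_num) (pos_nonneg _)
  rw [nsmul_eq m (a ⊔ 0)]
  exact mem_of_le hA hI (pos_nonneg _) (sup_le (le_trans hD hE) hG) hF


end BalAux
end BalAuxSection

/-- For a bal-algebra `A` and an ℓ-ideal `I` of `A`, the set
`K = {x | (n•|x| - 1)⁺ ∈ I for all n ≥ 1}` is an archimedean ℓ-ideal of `A`
containing `I`, it is least among archimedean ℓ-ideals containing `I`, and it
equals the archimedean hull `ar(I)`. -/
theorem archHull_eq {A : Type*} [CommRing A] [Lattice A] [Algebra ℝ A] (hA : IsBal A)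
    (I : Ideal A) (hI : IsLIdeal I) :
    ∃ K : Ideal A,
      (K : Set A) = {x : A | ∀ n : ℕ, 1 ≤ n → (n • (x ⊔ -x) - 1) ⊔ 0 ∈ I} ∧
      IsLIdeal K ∧ IsArchLIdeal K ∧ I ≤ K ∧
      (∀ J : Ideal A, IsLIdeal J → IsArchLIdeal J → I ≤ J → K ≤ J) ∧
      archHull (I : Set A) = K := by
  refine ⟨BalAux.balK hA I hI, rfl, BalAux.balK_lideal hA I hI, BalAux.balK_arch hA I hI,
    BalAux.balK_le hA I hI, BalAux.balK_least hA I hI, ?_⟩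
  apply le_antisymm
  · exact sInf_le ⟨BalAux.balK_lideal hA I hI, BalAux.balK_arch hA I hI,
      fun x hx => BalAux.balK_le hA I hI hx⟩
  · exact le_sInf fun J hJ => BalAux.balK_least hA I hI J hJ.1 hJ.2.1 fun x hx => hJ.2.2 hx
end

section
/- Let A be a bal-algebra, let e, f ∈ A be idempotents (e² = e and f² = f), and let r, s ∈ ℝ with 0 ≤ r and 0 ≤ s. Then (r·e) ⊓ (s·f) = min(r, s)·(e ⊓ f), where ⊓ denotes the lattice meet in A. -/
section BalAux
variable {A : Type*} [CommRing A] [Lattice A] [Algebra ℝ A]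

theorem bal_cov (hA : IsBal A) : AddLeftMono A :=
  ⟨fun c a b h => by simpa [add_comm c] using hA.add_le_add_right a b h c⟩

theorem bal_cov' (hA : IsBal A) : AddRightMono A :=
  ⟨fun c a b h => hA.add_le_add_right a b h c⟩

theorem bal_disj_add (hA : IsBal A) {x y b : A} (hx : x ⊓ b = 0) (hy : y ⊓ b = 0) :
    (x + y) ⊓ b = 0 := by
  letI := bal_cov hA; letI := bal_cov' hA
  have hx0 : (0 : A) ≤ x := hx ▸ inf_le_left
  have hy0 : (0 : A) ≤ y := hy ▸ inf_le_left
  have hb0 : (0 : A) ≤ b := hx ▸ inf_le_right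
  refine le_antisymm ?_ (le_inf (add_nonneg hx0 hy0) hb0)
  have h1 : (x + y) ⊓ b - x ≤ y := sub_le_iff_le_add'.2 inf_le_left
  have h2 : (x + y) ⊓ b - x ≤ b :=
    sub_le_iff_le_add'.2 (le_trans inf_le_right (le_add_of_nonneg_left hx0))
  have h3 : (x + y) ⊓ b - x ≤ 0 := hy ▸ le_inf h1 h2
  have h4 : (x + y) ⊓ b ≤ x := sub_nonpos.1 h3
  calc (x + y) ⊓ b ≤ x ⊓ b := le_inf h4 inf_le_right
    _ = 0 := hx

theorem bal_disj_nsmul (hA : IsBal A) {a b : A} (h : a ⊓ b = 0) (n : ℕ) :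
    (n • a) ⊓ b = 0 := by
  induction n with
  | zero =>
    have hb0 : (0 : A) ≤ b := h ▸ inf_le_right
    simpa using le_antisymm inf_le_left (le_inf le_rfl hb0)
  | succ n ih =>
    rw [succ_nsmul]
    exact bal_disj_add hA ih h

theorem bal_disj_mul (hA : IsBal A) {a b c : A} (h : a ⊓ b = 0) (hc : 0 ≤ c) :
    (c * a) ⊓ b = 0 := by
  letI := bal_cov hA; letI := bal_cov' hA
  have ha0 : (0 : A) ≤ a := h ▸ inf_le_left
  have hb0 : (0 : A) ≤ b := h ▸ inf_le_right
  obtain ⟨n, -, hcn⟩ := hA.strong_unit c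
  have h1 : c * a ≤ n • a := by
    have h2 : (0 : A) ≤ (n • (1 : A) - c) * a :=
      hA.mul_nonneg _ _ (sub_nonneg.2 hcn) ha0
    have h3 : (n • (1 : A) - c) * a = n • a - c * a := by
      rw [sub_mul, smul_mul_assoc, one_mul]
    exact sub_nonneg.1 (h3 ▸ h2)
  refine le_antisymm ?_ (le_inf (hA.mul_nonneg _ _ hc ha0) hb0)
  calc (c * a) ⊓ b ≤ (n • a) ⊓ b := inf_le_inf_right b h1
    _ = 0 := bal_disj_nsmul hA h n

theorem bal_idem_nonneg (hA : IsBal A) {e : A} (he : e * e = e) : 0 ≤ e := by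
  letI := bal_cov hA; letI := bal_cov' hA
  have h0 : e⁺ ⊓ e⁻ = 0 := posPart_inf_negPart_eq_zero e
  have h1 : (e⁻ * e⁺) ⊓ e⁻ = 0 := bal_disj_mul hA h0 (negPart_nonneg e)
  have h2 : e⁻ ⊓ (e⁻ * e⁺) = 0 := by rw [inf_comm]; exact h1
  have h3 : (e⁺ * e⁻) ⊓ (e⁻ * e⁺) = 0 := bal_disj_mul hA h2 (posPart_nonneg e)
  have hpq : e⁺ * e⁻ = 0 := by
    have := h3
    rw [mul_comm e⁻ e⁺, inf_idem] at this
    exact this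
  have hsub : e⁺ - e⁻ = e := posPart_sub_negPart e
  have hsq : e = e⁺ * e⁺ + e⁻ * e⁻ := by
    calc e = e * e := he.symm
      _ = (e⁺ - e⁻) * (e⁺ - e⁻) := by rw [hsub]
      _ = e⁺ * e⁺ + e⁻ * e⁻ - 2 * (e⁺ * e⁻) := by ring
      _ = e⁺ * e⁺ + e⁻ * e⁻ := by rw [hpq]; ring
  rw [hsq]
  exact add_nonneg (hA.mul_nonneg _ _ (posPart_nonneg e) (posPart_nonneg e))
    (hA.mul_nonneg _ _ (negPart_nonneg e) (negPart_nonneg e))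

end BalAux

/-- In a bal-algebra, for idempotents `e, f` and nonnegative reals `r, s`,
`(r • e) ⊓ (s • f) = min r s • (e ⊓ f)`. -/
theorem smul_idem_inf {A : Type*} [CommRing A] [Lattice A] [Algebra ℝ A] (hA : IsBal A)
    (e f : A) (he : e * e = e) (hf : f * f = f)
    (r s : ℝ) (hr : 0 ≤ r) (hs : 0 ≤ s) :
    (r • e) ⊓ (s • f) = min r s • (e ⊓ f) := by
  letI := bal_cov hA; letI := bal_cov' hA
  -- basic positivity facts
  have hsmul : ∀ (t : ℝ), 0 ≤ t → ∀ (x : A), 0 ≤ x → 0 ≤ t • x := by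
    intro t ht x hx
    rw [Algebra.smul_def]
    refine hA.mul_nonneg _ _ ?_ hx
    simpa using hA.algebraMap_mono ht
  have he0 : (0 : A) ≤ e := bal_idem_nonneg hA he
  have hf0 : (0 : A) ≤ f := bal_idem_nonneg hA hf
  have he1 : e ≤ 1 := by
    have h1 : (1 - e) * (1 - e) = 1 - e := by linear_combination he
    exact sub_nonneg.1 (bal_idem_nonneg hA h1)
  have hf1 : f ≤ 1 := by
    have h1 : (1 - f) * (1 - f) = 1 - f := by linear_combination hf
    exact sub_nonneg.1 (bal_idem_nonneg hA h1)
  have hef0 : (0 : A) ≤ e * f := hA.mul_nonneg _ _ he0 hf0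
  have hef_le_e : e * f ≤ e := by
    have h1 : (0 : A) ≤ e * (1 - f) := hA.mul_nonneg _ _ he0 (sub_nonneg.2 hf1)
    have h2 : e * (1 - f) = e - e * f := by ring
    exact sub_nonneg.1 (h2 ▸ h1)
  have hef_le_f : e * f ≤ f := by
    have h1 : (0 : A) ≤ f * (1 - e) := hA.mul_nonneg _ _ hf0 (sub_nonneg.2 he1)
    have h2 : f * (1 - e) = f - e * f := by ring
    exact sub_nonneg.1 (h2 ▸ h1)
  -- e ⊓ f = e * f
  have hinf : e ⊓ f = e * f := by
    refine le_antisymm ?_ (le_inf hef_le_e hef_le_f)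
    set g := e ⊓ f with hg
    have hgf : g ≤ g * f := by
      have h1 : (0 : A) ≤ (f - g) * (1 - f) :=
        hA.mul_nonneg _ _ (sub_nonneg.2 inf_le_right) (sub_nonneg.2 hf1)
      have h2 : (f - g) * (1 - f) = (g * f - g) + (f - f * f) := by ring
      rw [h2, hf, sub_self, add_zero] at h1
      exact sub_nonneg.1 h1
    have hgf2 : g * f ≤ e * f := by
      have h1 : (0 : A) ≤ (e - g) * f :=
        hA.mul_nonneg _ _ (sub_nonneg.2 inf_le_left) hf0
      have h2 : (e - g) * f = e * f - g * f := by ring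
      exact sub_nonneg.1 (h2 ▸ h1)
    exact hgf.trans hgf2
  rw [hinf]
  -- smul monotonicity helpers
  have hsmul_le : ∀ (t u : ℝ), t ≤ u → ∀ (x : A), 0 ≤ x → t • x ≤ u • x := by
    intro t u htu x hx
    have := hsmul (u - t) (sub_nonneg.2 htu) x hx
    rw [sub_smul] at this
    exact sub_nonneg.1 this
  have hsmul_mono : ∀ (t : ℝ), 0 ≤ t → ∀ (x y : A), x ≤ y → t • x ≤ t • y := by
    intro t ht x y hxy
    have := hsmul t ht (y - x) (sub_nonneg.2 hxy)
    rw [smul_sub] at this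
    exact sub_nonneg.1 this
  refine le_antisymm ?_ (le_inf ?_ ?_)
  · -- (r•e) ⊓ (s•f) ≤ min r s • (e*f)
    set g := (r • e) ⊓ (s • f) with hg
    have hg_le_ref : g ≤ r • (e * f) := by
      have hgf : g ≤ g * f := by
        have h1 : (0 : A) ≤ (s • f - g) * (1 - f) :=
          hA.mul_nonneg _ _ (sub_nonneg.2 inf_le_right) (sub_nonneg.2 hf1)
        have h2 : (s • f - g) * (1 - f) = (g * f - g) + (s • f - (s • f) * f) := by ring
        have h3 : (s • f) * f = s • f := by rw [smul_mul_assoc, hf]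
        rw [h2, h3, sub_self, add_zero] at h1
        exact sub_nonneg.1 h1
      have hgf2 : g * f ≤ r • (e * f) := by
        have h1 : (0 : A) ≤ (r • e - g) * f :=
          hA.mul_nonneg _ _ (sub_nonneg.2 inf_le_left) hf0
        have h2 : (r • e - g) * f = (r • e) * f - g * f := by ring
        have h3 : (r • e) * f = r • (e * f) := smul_mul_assoc r e f
        rw [h2, h3] at h1
        exact sub_nonneg.1 h1
      exact hgf.trans hgf2
    have hg_le_sef : g ≤ s • (e * f) := by
      have hge : g ≤ g * e := by
        have h1 : (0 : A) ≤ (r • e - g) * (1 - e) :=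
          hA.mul_nonneg _ _ (sub_nonneg.2 inf_le_left) (sub_nonneg.2 he1)
        have h2 : (r • e - g) * (1 - e) = (g * e - g) + (r • e - (r • e) * e) := by ring
        have h3 : (r • e) * e = r • e := by rw [smul_mul_assoc, he]
        rw [h2, h3, sub_self, add_zero] at h1
        exact sub_nonneg.1 h1
      have hge2 : g * e ≤ s • (e * f) := by
        have h1 : (0 : A) ≤ (s • f - g) * e :=
          hA.mul_nonneg _ _ (sub_nonneg.2 inf_le_right) he0
        have h2 : (s • f - g) * e = (s • f) * e - g * e := by ring
        have h3 : (s • f) * e = s • (e * f) := by rw [smul_mul_assoc, mul_comm]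
        rw [h2, h3] at h1
        exact sub_nonneg.1 h1
      exact hge.trans hge2
    rcases le_total r s with h | h
    · rw [min_eq_left h]; exact hg_le_ref
    · rw [min_eq_right h]; exact hg_le_sef
  · -- min r s • (e*f) ≤ r • e
    calc min r s • (e * f) ≤ r • (e * f) := hsmul_le _ _ (min_le_left r s) _ hef0
      _ ≤ r • e := hsmul_mono r hr _ _ hef_le_e
  · calc min r s • (e * f) ≤ s • (e * f) := hsmul_le _ _ (min_le_right r s) _ hef0
      _ ≤ s • f := hsmul_mono s hs _ _ hef_le_f
end

section
/- Let A be a bal-algebra, a ∈ A, and r, s ∈ ℝ with r < s. If a ⊔ r·1 ≥ s·1, then a ≥ s·1. -/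
section Aux
variable {A : Type*} [CommRing A] [Lattice A] [Algebra ℝ A] (hA : IsBal A)
include hA

lemma bal_le_iff_sub (u v : A) : u ≤ v ↔ 0 ≤ v - u := by
  constructor
  · intro h; have := hA.add_le_add_right u v h (-u); simpa [sub_eq_add_neg] using this
  · intro h; have := hA.add_le_add_right 0 (v - u) h u; simpa using this

lemma bal_sup_add (u v c : A) : (u ⊔ v) + c = (u + c) ⊔ (v + c) := by
  apply le_antisymm
  · rw [bal_le_iff_sub hA]
    have h1 : u ≤ (u + c) ⊔ (v + c) - c := by
      rw [bal_le_iff_sub hA]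
      have h : (0:A) ≤ (u + c) ⊔ (v + c) - (u + c) := (bal_le_iff_sub hA _ _).mp le_sup_left
      calc (0:A) ≤ (u + c) ⊔ (v + c) - (u + c) := h
        _ = (u + c) ⊔ (v + c) - c - u := by ring
    have h2 : v ≤ (u + c) ⊔ (v + c) - c := by
      rw [bal_le_iff_sub hA]
      have h : (0:A) ≤ (u + c) ⊔ (v + c) - (v + c) := (bal_le_iff_sub hA _ _).mp le_sup_right
      calc (0:A) ≤ (u + c) ⊔ (v + c) - (v + c) := h
        _ = (u + c) ⊔ (v + c) - c - v := by ring
    have h3 := (bal_le_iff_sub hA _ _).mp (sup_le h1 h2)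
    calc (0:A) ≤ (u + c) ⊔ (v + c) - c - (u ⊔ v) := h3
      _ = (u + c) ⊔ (v + c) - (u ⊔ v + c) := by ring
  · exact sup_le (hA.add_le_add_right u (u ⊔ v) le_sup_left c)
      (hA.add_le_add_right v (u ⊔ v) le_sup_right c)

lemma bal_neg_antitone {u v : A} (h : u ≤ v) : -v ≤ -u := by
  rw [bal_le_iff_sub hA]
  have h' := (bal_le_iff_sub hA u v).mp h
  calc (0:A) ≤ v - u := h'
    _ = -u - -v := by ring

lemma bal_neg_sup (u v : A) : -(u ⊔ v) = (-u) ⊓ (-v) := by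
  apply le_antisymm
  · exact le_inf (bal_neg_antitone hA le_sup_left) (bal_neg_antitone hA le_sup_right)
  · have h1 : u ≤ -((-u) ⊓ (-v)) := by
      have := bal_neg_antitone hA (inf_le_left : (-u) ⊓ (-v) ≤ -u); simpa using this
    have h2 : v ≤ -((-u) ⊓ (-v)) := by
      have := bal_neg_antitone hA (inf_le_right : (-u) ⊓ (-v) ≤ -v); simpa using this
    have := bal_neg_antitone hA (sup_le h1 h2); simpa using this

lemma bal_inf_add (u v c : A) : (u ⊓ v) + c = (u + c) ⊓ (v + c) := by
  have e1 : u ⊓ v = -((-u) ⊔ (-v)) := by rw [bal_neg_sup hA]; simp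
  have e2 : (u + c) ⊓ (v + c) = -((-(u + c)) ⊔ (-(v + c))) := by rw [bal_neg_sup hA]; simp
  rw [e1, e2]
  have e3 : (-(u + c)) ⊔ (-(v + c)) = ((-u) ⊔ (-v)) + -c := by
    rw [bal_sup_add hA]; ring_nf
  rw [e3]; ring

lemma bal_inf_eq (u v : A) : u ⊓ v = u + v - (u ⊔ v) := by
  have h := bal_inf_add hA (-u) (-v) (u + v)
  have e1 : -u + (u + v) = v := by ring
  have e2 : -v + (u + v) = u := by ring
  rw [e1, e2, ← bal_neg_sup hA] at h
  calc u ⊓ v = v ⊓ u := inf_comm u v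
    _ = -(u ⊔ v) + (u + v) := h.symm
    _ = u + v - (u ⊔ v) := by ring

lemma bal_smul_nonneg {l : ℝ} (hl : 0 ≤ l) {u : A} (hu : 0 ≤ u) : 0 ≤ l • u := by
  rw [Algebra.smul_def]
  apply hA.mul_nonneg _ _ _ hu
  have := hA.algebraMap_mono hl
  simpa using this

lemma bal_smul_mono {l : ℝ} (hl : 0 ≤ l) {u v : A} (huv : u ≤ v) : l • u ≤ l • v := by
  rw [bal_le_iff_sub hA]
  have h := (bal_le_iff_sub hA u v).mp huv
  have := bal_smul_nonneg hA hl h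
  rwa [smul_sub] at this

end Aux

/-- In a bal-algebra, if `r < s` are reals and `a ⊔ r·1 ≥ s·1`, then `a ≥ s·1`. -/
theorem ge_of_sup_const_ge {A : Type*} [CommRing A] [Lattice A] [Algebra ℝ A] (hA : IsBal A)
    (a : A) (r s : ℝ) (hrs : r < s)
    (h : algebraMap ℝ A s ≤ a ⊔ algebraMap ℝ A r) :
    algebraMap ℝ A s ≤ a := by
  set f := algebraMap ℝ A with hf
  set x : A := f s - a with hx
  set t : A := f (s - r) with ht
  -- x ⊓ t ≤ 0
  have hxt : x ⊓ t ≤ 0 := by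
    have e : x ⊓ t = f s - (a ⊔ f r) := by
      have : x ⊓ t = ((-a) ⊓ (-(f r))) + f s := by
        rw [bal_inf_add hA]
        congr 1
        · rw [hx]; ring
        · rw [ht, map_sub]; ring
      rw [this, ← bal_neg_sup hA]; ring
    rw [e, bal_le_iff_sub hA]
    have h' := (bal_le_iff_sub hA (f s) (a ⊔ f r)).mp h
    calc (0:A) ≤ a ⊔ f r - f s := h'
      _ = 0 - (f s - (a ⊔ f r)) := by ring
  set q : A := (x - t) ⊔ 0 with hq
  set p : A := x ⊔ 0 with hp
  -- x ≤ q
  have hxq : x ≤ q := by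
    have e : x - q = x ⊓ t := by
      rw [bal_inf_eq hA, hq]
      have : (x - t) ⊔ 0 = (x ⊔ t) - t := by
        rw [sub_eq_add_neg (x ⊔ t) t, bal_sup_add hA x t (-t)]
        have e1 : x + -t = x - t := by ring
        have e2 : t + -t = 0 := by ring
        rw [e1, e2]
      rw [this]; ring
    rw [bal_le_iff_sub hA]
    calc (0:A) ≤ -(x ⊓ t) := by
          have := bal_neg_antitone hA hxt; simpa using this
      _ = q - x := by rw [← e]; ring
  have hq0 : (0:A) ≤ q := le_sup_right
  have hpq : p ≤ q := sup_le hxq hq0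
  have hxp : x ≤ p := le_sup_left
  have hp0 : (0:A) ≤ p := le_sup_right
  -- p ⊓ t ≤ 0
  have hpt : p ⊓ t ≤ 0 := by
    have e : p ⊓ t = p - ((p - t) ⊔ 0) := by
      rw [bal_inf_eq hA]
      have : (p - t) ⊔ 0 = (p ⊔ t) - t := by
        rw [sub_eq_add_neg (p ⊔ t) t, bal_sup_add hA p t (-t)]
        have e1 : p + -t = p - t := by ring
        have e2 : t + -t = 0 := by ring
        rw [e1, e2]
      rw [this]; ring
    have hqle : q ≤ (p - t) ⊔ 0 := by
      apply sup_le _ le_sup_right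
      have : x - t ≤ p - t := by
        rw [bal_le_iff_sub hA]
        have := (bal_le_iff_sub hA x p).mp hxp
        calc (0:A) ≤ p - x := this
          _ = p - t - (x - t) := by ring
      exact le_trans this le_sup_left
    rw [e]
    have h1 : p - ((p - t) ⊔ 0) ≤ p - q := by
      rw [bal_le_iff_sub hA]
      have := (bal_le_iff_sub hA q ((p - t) ⊔ 0)).mp hqle
      calc (0:A) ≤ (p - t) ⊔ 0 - q := this
        _ = p - q - (p - ((p - t) ⊔ 0)) := by ring
    have h2 : p - q ≤ 0 := by
      have := (bal_le_iff_sub hA p q).mp hpq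
      have h3 := bal_neg_antitone hA this
      calc p - q = -(q - p) := by ring
        _ ≤ -0 := h3
        _ = 0 := by ring
    exact le_trans h1 h2
  -- strong unit bound and scaling trick
  obtain ⟨m, hm1, hmle⟩ := hA.strong_unit p
  set c : ℝ := s - r with hc
  have hcpos : 0 < c := by simp [hc]; linarith
  set l : ℝ := max 1 ((m : ℝ) / c) with hl
  have hl1 : (1:ℝ) ≤ l := le_max_left _ _
  have hlpos : 0 < l := lt_of_lt_of_le one_pos hl1
  have hlc : (m : ℝ) ≤ l * c := by
    have : (m : ℝ) / c ≤ l := le_max_right _ _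
    calc (m : ℝ) = ((m : ℝ) / c) * c := by field_simp
      _ ≤ l * c := by nlinarith
  -- p ≤ l • p
  have hple1 : p ≤ l • p := by
    rw [bal_le_iff_sub hA]
    have : (0:A) ≤ (l - 1) • p := bal_smul_nonneg hA (by linarith) hp0
    calc (0:A) ≤ (l - 1) • p := this
      _ = l • p - p := by rw [sub_smul, one_smul]
  -- p ≤ l • t
  have hple2 : p ≤ l • t := by
    have e1 : (m : ℕ) • (1 : A) = f (m : ℝ) := by
      rw [nsmul_eq_mul, mul_one, hf, map_natCast]
    have e2 : l • t = f (l * c) := by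
      rw [ht, hf, Algebra.smul_def, ← map_mul]
    have : f (m : ℝ) ≤ f (l * c) := hA.algebraMap_mono hlc
    calc p ≤ (m : ℕ) • (1 : A) := hmle
      _ = f (m : ℝ) := e1
      _ ≤ f (l * c) := this
      _ = l • t := e2.symm
  -- l⁻¹ • p ≤ p ⊓ t ≤ 0, hence p ≤ 0
  have hinvp : l⁻¹ • p ≤ p := by
    have := bal_smul_mono hA (le_of_lt (inv_pos.mpr hlpos)) hple1
    rwa [← smul_assoc, smul_eq_mul, inv_mul_cancel₀ (ne_of_gt hlpos), one_smul] at this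
  have hinvt : l⁻¹ • p ≤ t := by
    have := bal_smul_mono hA (le_of_lt (inv_pos.mpr hlpos)) hple2
    rwa [← smul_assoc, smul_eq_mul, inv_mul_cancel₀ (ne_of_gt hlpos), one_smul] at this
  have hinv0 : l⁻¹ • p ≤ 0 := le_trans (le_inf hinvp hinvt) hpt
  have hp_le0 : p ≤ 0 := by
    have := bal_smul_mono hA (le_of_lt hlpos) hinv0
    rwa [← smul_assoc, smul_eq_mul, mul_inv_cancel₀ (ne_of_gt hlpos), one_smul, smul_zero] at this
  have : x ≤ 0 := le_trans hxp hp_le0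
  rw [bal_le_iff_sub hA]
  have h3 := bal_neg_antitone hA this
  calc (0:A) = -0 := by ring
    _ ≤ -x := h3
    _ = a - f s := by rw [hx]; ring
end

section
/- Let A be a bal-algebra and let I, J be archimedean ℓ-ideals of A. If ar(I + J) = A (i.e., the join of I and J in the lattice of archimedean ℓ-ideals is all of A), then already I + J = A. -/
/-- For archimedean ℓ-ideals `I, J` of a bal-algebra, if `ar(I + J) = A` (i.e.,
the join of `I` and `J` in the lattice of archimedean ℓ-ideals is all of `A`),
then already `I + J = A`. -/
theorem add_eq_top_of_archHull_add_eq_top {A : Type*} [CommRing A] [Lattice A]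
    [Algebra ℝ A] (hA : IsBal A) (I J : Ideal A)
    (hI : IsLIdeal I) (hIa : IsArchLIdeal I) (hJ : IsLIdeal J) (hJa : IsArchLIdeal J)
    (h : archHull ((I + J : Ideal A) : Set A) = ⊤) :
    I + J = ⊤ := by
  haveI c1 : CovariantClass A A (· + ·) (· ≤ ·) :=
    ⟨fun c a b hab => by simpa [add_comm] using hA.add_le_add_right a b hab c⟩
  haveI c2 : CovariantClass A A (Function.swap (· + ·)) (· ≤ ·) :=
    ⟨fun c a b hab => by simpa using hA.add_le_add_right a b hab c⟩
  set f := algebraMap ℝ A with hf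
  -- basic facts
  have hfpos : ∀ c : ℝ, 0 ≤ c → 0 ≤ f c := fun c hc => by
    simpa using hA.algebraMap_mono hc
  have hscmul : ∀ (c : ℝ) (x : A), 0 ≤ c → 0 ≤ x → 0 ≤ f c * x := fun c x hc hx =>
    hA.mul_nonneg _ _ (hfpos c hc) hx
  have hscmono : ∀ (c : ℝ) (x y : A), 0 ≤ c → x ≤ y → f c * x ≤ f c * y := by
    intro c x y hc hxy
    have := hscmul c (y - x) hc (sub_nonneg.mpr hxy)
    rw [mul_sub] at this
    exact sub_nonneg.mp this
  have hns : ∀ (n : ℕ) (z : A), n • z = f (n : ℝ) * z := fun n z => by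
    rw [nsmul_eq_mul, map_natCast]
  have habs : ∀ a : A, |a| = a ⊔ -a := fun _ => rfl
  -- half lemma
  have hhalf : ∀ x : A, 0 ≤ x + x → 0 ≤ x := by
    intro x hx
    have h2 : f (1/2) * (x + x) = x := by
      rw [mul_add, ← add_mul, ← map_add]
      norm_num
    have := hscmul (1/2) (x + x) (by norm_num) hx
    rwa [h2] at this
  -- |a*b| ≤ |a|*|b|
  have habsmul : ∀ a b : A, |a * b| ≤ |a| * |b| := by
    intro a b
    have ppa : 0 ≤ |a| + a := by simpa [sub_neg_eq_add] using sub_nonneg.mpr (neg_le_abs a)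
    have ppb : 0 ≤ |b| + b := by simpa [sub_neg_eq_add] using sub_nonneg.mpr (neg_le_abs b)
    have pna : 0 ≤ |a| - a := sub_nonneg.mpr (le_abs_self a)
    have pnb : 0 ≤ |b| - b := sub_nonneg.mpr (le_abs_self b)
    have h1 : 0 ≤ (|a| - a) * (|b| - b) := hA.mul_nonneg _ _ pna pnb
    have h2 : 0 ≤ (|a| + a) * (|b| + b) := hA.mul_nonneg _ _ ppa ppb
    have h3 : 0 ≤ (|a| - a) * (|b| + b) := hA.mul_nonneg _ _ pna ppb
    have h4 : 0 ≤ (|a| + a) * (|b| - b) := hA.mul_nonneg _ _ ppa pnb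
    have e1 : 0 ≤ (|a| * |b| + a * b) + (|a| * |b| + a * b) := by
      have heq : (|a| - a) * (|b| - b) + (|a| + a) * (|b| + b)
          = (|a| * |b| + a * b) + (|a| * |b| + a * b) := by ring
      rw [← heq]; exact add_nonneg h1 h2
    have e2 : 0 ≤ (|a| * |b| - a * b) + (|a| * |b| - a * b) := by
      have heq : (|a| - a) * (|b| + b) + (|a| + a) * (|b| - b)
          = (|a| * |b| - a * b) + (|a| * |b| - a * b) := by ring
      rw [← heq]; exact add_nonneg h3 h4
    have g1 := hhalf _ e1
    have g2 := hhalf _ e2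
    rw [habs]
    refine sup_le (sub_nonneg.mp g2) ?_
    have : 0 ≤ |a| * |b| - -(a * b) := by simpa [sub_neg_eq_add] using g1
    exact sub_nonneg.mp this
  -- domination lemma
  have hdom : ∀ u v : A, 0 ≤ u → u ≤ v → v ∈ I + J → u ∈ I + J := by
    intro u v hu huv hv
    rw [Submodule.add_eq_sup] at hv ⊢
    obtain ⟨i, hi, j, hj, rfl⟩ := Submodule.mem_sup.mp hv
    have hiI : |i| ∈ I := hI _ i hi (by rw [← habs, ← habs, abs_abs])
    have hjJ : |j| ∈ J := hJ _ j hj (by rw [← habs, ← habs, abs_abs])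
    have h1 : u ≤ |i| + |j| := huv.trans (add_le_add (le_abs_self i) (le_abs_self j))
    set p := u ⊓ |i| with hpdef
    have hp0 : 0 ≤ p := le_inf hu (abs_nonneg i)
    have hpI : p ∈ I := by
      refine hI p |i| hiI (sup_le ?_ ?_)
      · exact le_sup_of_le_left inf_le_right
      · exact le_sup_of_le_left ((neg_nonpos.mpr hp0).trans (abs_nonneg i))
    have hq : u - p = (u - |i|) ⊔ 0 := by
      rw [hpdef, sub_eq_add_neg, neg_inf, add_sup, ← sub_eq_add_neg, ← sub_eq_add_neg,
        sub_self, sup_comm]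
    have hq0 : 0 ≤ u - p := by rw [hq]; exact le_sup_right
    have hqle : u - p ≤ |j| := by
      rw [hq]
      exact sup_le (sub_le_iff_le_add'.mpr h1) (abs_nonneg j)
    have hqJ : u - p ∈ J := by
      refine hJ _ |j| hjJ (sup_le ?_ ?_)
      · exact le_sup_of_le_left hqle
      · exact le_sup_of_le_left ((neg_nonpos.mpr hq0).trans (abs_nonneg j))
    have : u = p + (u - p) := by ring
    rw [this]
    exact Submodule.add_mem_sup hpI hqJ
  -- I + J is in K's defining set
  have hmemIJ : ∀ a : A, a ∈ I + J → |a| ∈ I + J := by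
    intro a ha
    rw [Submodule.add_eq_sup] at ha ⊢
    obtain ⟨i, hi, j, hj, rfl⟩ := Submodule.mem_sup.mp ha
    have hiI : |i| ∈ I := hI _ i hi (by rw [← habs, ← habs, abs_abs])
    have hjJ : |j| ∈ J := hJ _ j hj (by rw [← habs, ← habs, abs_abs])
    have := Submodule.add_mem_sup hiI hjJ
    rw [← Submodule.add_eq_sup] at this ⊢
    exact hdom _ _ (abs_nonneg _) (abs_add_le i j) this
  -- the closure ideal K
  set K : Ideal A :=
    { carrier := {a | ∀ ε : ℝ, 0 < ε → (|a| - f ε) ⊔ 0 ∈ I + J}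
      zero_mem' := by
        intro ε hε
        have : (|(0:A)| - f ε) ⊔ 0 = 0 := by
          rw [abs_zero, zero_sub, sup_eq_right]
          simpa using hfpos ε hε.le
        rw [this]; exact zero_mem _
      add_mem' := by
        intro a b ha hb ε hε
        have h2 : 0 < ε / 2 := by linarith
        have hva := ha (ε/2) h2
        have hvb := hb (ε/2) h2
        refine hdom _ ((|a| - f (ε/2)) ⊔ 0 + ((|b| - f (ε/2)) ⊔ 0)) le_sup_right
          (sup_le ?_ (add_nonneg le_sup_right le_sup_right)) (add_mem hva hvb)
        have hfe : f ε = f (ε/2) + f (ε/2) := by rw [← map_add]; norm_num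
        calc |a + b| - f ε ≤ (|a| + |b|) - (f (ε/2) + f (ε/2)) := by
              rw [← hfe]; exact sub_le_sub_right (abs_add_le a b) _
          _ = (|a| - f (ε/2)) + (|b| - f (ε/2)) := by ring
          _ ≤ _ := add_le_add le_sup_left le_sup_left
      smul_mem' := by
        intro c a ha
        intro ε hε
        rw [smul_eq_mul]
        obtain ⟨n, hn1, hcn⟩ := hA.strong_unit |c|
        have hnR : (0:ℝ) < n := by exact_mod_cast hn1
        have hεn : 0 < ε / n := by positivity
        have hva := ha (ε / n) hεn
        have hv' : f (n:ℝ) * ((|a| - f (ε/n)) ⊔ 0) ∈ I + J := Ideal.mul_mem_left _ _ hva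
        refine hdom _ _ le_sup_right (sup_le ?_ (hscmul _ _ hnR.le le_sup_right)) hv'
        have step1 : |c * a| ≤ f (n:ℝ) * |a| := by
          refine (habsmul c a).trans ?_
          have hcn' : |c| ≤ f (n:ℝ) := by
            have := hns n (1:A); rw [mul_one] at this; rw [← this]; exact hcn
          have : 0 ≤ (f (n:ℝ) - |c|) * |a| :=
            hA.mul_nonneg _ _ (sub_nonneg.mpr hcn') (abs_nonneg a)
          rw [sub_mul] at this
          exact sub_nonneg.mp this
        have step2 : f (n:ℝ) * |a| - f ε = f (n:ℝ) * (|a| - f (ε/n)) := by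
          rw [mul_sub, ← map_mul]
          congr 2
          field_simp
        calc |c * a| - f ε ≤ f (n:ℝ) * |a| - f ε := sub_le_sub_right step1 _
          _ = f (n:ℝ) * (|a| - f (ε/n)) := step2
          _ ≤ f (n:ℝ) * ((|a| - f (ε/n)) ⊔ 0) := hscmono _ _ _ hnR.le le_sup_left }
    with hK
  have hKmem : ∀ a : A, a ∈ K ↔ ∀ ε : ℝ, 0 < ε → (|a| - f ε) ⊔ 0 ∈ I + J := fun a => Iff.rfl
  -- K is an ℓ-ideal
  have hKl : IsLIdeal K := by
    intro a b hb hab ε hε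
    have : (|a| - f ε) ⊔ 0 ≤ (|b| - f ε) ⊔ 0 := by
      refine sup_le ?_ le_sup_right
      refine le_sup_of_le_left (sub_le_sub_right ?_ _)
      rw [habs, habs]
      exact hab.trans (sup_le (le_abs_self b) (neg_le_abs b))
    exact hdom _ _ le_sup_right this (hb ε hε)
  -- K is archimedean
  have hKa : IsArchLIdeal K := by
    intro a b hyp ε hε
    obtain ⟨m, hm1, hbm⟩ := hA.strong_unit b
    obtain ⟨n, hn⟩ := exists_nat_gt ((m + 1) / ε)
    have hn1 : 1 ≤ n := by
      by_contra hcon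
      push_neg at hcon
      interval_cases n
      · simp only [Nat.cast_zero] at hn
        have hm1' : (1:ℝ) ≤ m := by exact_mod_cast hm1
        have hpos : (0:ℝ) < ((m:ℝ) + 1) / ε := by positivity
        linarith
    have hnR : (0:ℝ) < n := by exact_mod_cast hn1
    have hδ : (0:ℝ) < n * ε - m := by
      have : (m + 1) / ε < n := hn
      have := (div_lt_iff₀ hε).mp this
      nlinarith
    set δ : ℝ := n * ε - m with hδdef
    have hx := hyp n hn1
    set x : A := (n • a - b) ⊔ 0 with hxdef
    have hx0 : 0 ≤ x := le_sup_right
    have hvx : (|x| - f δ) ⊔ 0 ∈ I + J := hx δ hδ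
    have hxabs : |x| = x := abs_of_nonneg hx0
    rw [hxabs] at hvx
    have hv' : f (1/n) * ((x - f δ) ⊔ 0) ∈ I + J := Ideal.mul_mem_left _ _ hvx
    have hRHS0 : 0 ≤ f (1/n) * ((x - f δ) ⊔ 0) := hscmul _ _ (by positivity) le_sup_right
    refine hdom _ _ le_sup_right (sup_le ?_ hRHS0) hv'
    -- |a ⊔ 0| - f ε ≤ RHS
    have hsup0 : |a ⊔ 0| = a ⊔ 0 := abs_of_nonneg le_sup_right
    rw [hsup0]
    have key : n • (a - f ε) ≤ (x - f δ) ⊔ 0 := by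
      refine le_trans ?_ le_sup_left
      have h1 : n • a - b ≤ x := le_sup_left
      have h2 : b ≤ f (m:ℝ) := by
        have := hns m (1:A); rw [mul_one] at this; rw [← this]; exact hbm
      have h3 : n • (a - f ε) = n • a - f ((n:ℝ) * ε) := by
        rw [hns, hns, mul_sub, ← map_mul]
      rw [h3]
      have : f ((n:ℝ) * ε) = f (m:ℝ) + f δ := by rw [← map_add, hδdef]; ring_nf
      calc n • a - f ((n:ℝ)*ε) = (n • a - b) + (b - f ((n:ℝ)*ε)) := by ring
        _ ≤ x + (f (m:ℝ) - f ((n:ℝ)*ε)) := add_le_add h1 (sub_le_sub_right h2 _)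
        _ = x - f δ := by rw [this]; ring
    have hdiv : a - f ε ≤ f (1/n) * ((x - f δ) ⊔ 0) := by
      have := hscmono (1/n) _ _ (by positivity) key
      rw [hns] at this
      rw [← mul_assoc, ← map_mul] at this
      have hone : (1/(n:ℝ)) * n = 1 := by field_simp
      rw [hone, map_one, one_mul] at this
      exact this
    -- (a ⊔ 0) - f ε = (a - f ε) ⊔ (- f ε)
    have hsplit : (a ⊔ 0) - f ε = (a - f ε) ⊔ (0 - f ε) := by
      rw [sub_eq_add_neg, sup_add, ← sub_eq_add_neg, ← sub_eq_add_neg]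
    rw [hsplit]
    refine sup_le hdiv ?_
    rw [zero_sub]
    exact (neg_nonpos.mpr (hfpos ε hε.le)).trans hRHS0
  -- I + J ⊆ K
  have hIJK : ((I + J : Ideal A) : Set A) ⊆ ↑K := by
    intro a ha
    intro ε hε
    have h1 : (|a| - f ε) ⊔ 0 ≤ |a| :=
      sup_le (sub_le_self _ (hfpos ε hε.le)) (abs_nonneg a)
    exact hdom _ _ le_sup_right h1 (hmemIJ a ha)
  -- conclude
  have hKset : K ∈ {I' : Ideal A | IsLIdeal I' ∧ IsArchLIdeal I' ∧ ((I + J : Ideal A) : Set A) ⊆ ↑I'} :=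
    ⟨hKl, hKa, hIJK⟩
  have hle : archHull ((I + J : Ideal A) : Set A) ≤ K := sInf_le hKset
  rw [h] at hle
  have hK1 : (1 : A) ∈ K := hle trivial
  have h12 := hK1 (1/2) (by norm_num)
  have h01 : (0:A) ≤ 1 := by simpa using hfpos 1 zero_le_one
  have habs1 : |(1:A)| = 1 := abs_of_nonneg h01
  have heq : (|(1:A)| - f (1/2)) ⊔ 0 = f (1/2) := by
    rw [habs1]
    have : (1:A) - f (1/2) = f (1/2) := by
      rw [← map_one f, ← map_sub]; norm_num
    rw [this, sup_eq_left]
    exact hfpos _ (by norm_num)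
  rw [heq] at h12
  have : (1:A) ∈ I + J := by
    have := Ideal.mul_mem_left (I + J) (f 2) h12
    rw [← map_mul] at this
    norm_num at this
    exact this
  exact Ideal.eq_top_of_isUnit_mem _ this isUnit_one
end

section
/- Let A be a bal-algebra, I a proper archimedean ℓ-ideal of A, and a ∈ A with 0 ≤ a. Then the set R = {r ∈ ℝ | (a − r·1)⁻ ∈ I} is nonempty and bounded above, and, setting s = sup R, one has (a − s·1)⁻ ∈ I. -/
section helpers
variable {A : Type*} [CommRing A] [Lattice A] [Algebra ℝ A] (hA : IsBal A)
include hA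
set_option linter.unusedSectionVars false

lemma bal_sub_nonneg {a b : A} (h : a ≤ b) : 0 ≤ b - a := by
  have := hA.add_le_add_right a b h (-a)
  simpa [sub_eq_add_neg] using this

lemma bal_le_of_sub_nonneg {a b : A} (h : 0 ≤ b - a) : a ≤ b := by
  have := hA.add_le_add_right 0 (b - a) h a
  simpa using this

lemma bal_add_nonneg {a b : A} (h1 : 0 ≤ a) (h2 : 0 ≤ b) : 0 ≤ a + b := by
  have h3 := hA.add_le_add_right 0 a h1 b
  rw [zero_add] at h3
  exact h2.trans h3

lemma bal_nsmul_nonneg {a : A} (h : 0 ≤ a) (n : ℕ) : 0 ≤ n • a := by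
  induction n with
  | zero => simp
  | succ k ih => rw [succ_nsmul]; exact bal_add_nonneg hA ih h

lemma bal_nsmul_le {a b : A} (h : a ≤ b) (n : ℕ) : n • a ≤ n • b := by
  apply bal_le_of_sub_nonneg hA
  rw [← smul_sub]
  exact bal_nsmul_nonneg hA (bal_sub_nonneg hA h) n

lemma bal_algebraMap_nonneg {t : ℝ} (h : 0 ≤ t) : 0 ≤ algebraMap ℝ A t := by
  simpa using hA.algebraMap_mono h

lemma bal_neg_nonpos {a : A} (h : 0 ≤ a) : -a ≤ 0 := by
  apply bal_le_of_sub_nonneg hA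
  simpa using h

lemma bal_nsmul_algebraMap (n : ℕ) (t : ℝ) :
    n • algebraMap ℝ A t = algebraMap ℝ A (n * t) := by
  rw [nsmul_eq_mul, map_mul, map_natCast]

/-- squeeze lemma for ℓ-ideals: if `0 ≤ u ≤ v` with `v ∈ I`, then `u ∈ I`. -/
lemma bal_mem_of_squeeze {I : Ideal A} (hI : IsLIdeal I) {u v : A}
    (hv : v ∈ I) (h0v : 0 ≤ v) (h0u : 0 ≤ u) (huv : u ≤ v) : u ∈ I := by
  refine hI u v hv (sup_le (huv.trans le_sup_left) ?_)
  exact (bal_neg_nonpos hA h0u).trans (h0v.trans le_sup_left)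

end helpers

/-- In a bal-algebra, for a proper archimedean ℓ-ideal `I` and `0 ≤ a`, the set
`R = {r : ℝ | (a - r·1)⁻ ∈ I}` is nonempty and bounded above, and
`(a - (sup R)·1)⁻ ∈ I`, where `x⁻ = (-x) ⊔ 0`. -/
theorem negPart_sub_sSup_mem {A : Type*} [CommRing A] [Lattice A] [Algebra ℝ A]
    (hA : IsBal A) (I : Ideal A)
    (hI : IsLIdeal I) (hIa : IsArchLIdeal I) (hIp : I ≠ ⊤)
    (a : A) (ha : 0 ≤ a) :
    {r : ℝ | -(a - algebraMap ℝ A r) ⊔ 0 ∈ I}.Nonempty ∧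
    BddAbove {r : ℝ | -(a - algebraMap ℝ A r) ⊔ 0 ∈ I} ∧
    -(a - algebraMap ℝ A (sSup {r : ℝ | -(a - algebraMap ℝ A r) ⊔ 0 ∈ I})) ⊔ 0 ∈ I := by
  set R : Set ℝ := {r : ℝ | -(a - algebraMap ℝ A r) ⊔ 0 ∈ I} with hR
  -- nonempty: 0 ∈ R
  have hne : (0 : ℝ) ∈ R := by
    have h1 : -(a - algebraMap ℝ A 0) ⊔ 0 = 0 := by
      rw [map_zero, sub_zero]
      exact sup_eq_right.mpr (bal_neg_nonpos hA ha)
    show -(a - algebraMap ℝ A 0) ⊔ 0 ∈ I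
    rw [h1]; exact I.zero_mem
  -- strong unit bound
  obtain ⟨m, hm1, hm⟩ := hA.strong_unit a
  have hma : a ≤ algebraMap ℝ A (m : ℝ) := by
    have hcast : algebraMap ℝ A (m : ℝ) = m • (1 : A) := by
      rw [map_natCast, nsmul_eq_mul, mul_one]
    exact hm.trans_eq hcast.symm
  -- bounded above by m
  have hbdd : BddAbove R := by
    refine ⟨(m : ℝ), fun r hr => ?_⟩
    by_contra hcon
    push_neg at hcon
    have ht : (0 : ℝ) < r - m := by linarith
    set b : A := -(a - algebraMap ℝ A r) ⊔ 0 with hb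
    have hbI : b ∈ I := hr
    have h0b : (0 : A) ≤ b := le_sup_right
    have hle : algebraMap ℝ A (r - m) ≤ b := by
      refine le_trans ?_ (le_sup_left : -(a - algebraMap ℝ A r) ≤ b)
      apply bal_le_of_sub_nonneg hA
      have heq : -(a - algebraMap ℝ A r) - algebraMap ℝ A (r - m) =
          algebraMap ℝ A (m : ℝ) - a := by
        rw [map_sub, map_natCast]; ring
      rw [heq]
      exact bal_sub_nonneg hA hma
    have htI : algebraMap ℝ A (r - m) ∈ I :=
      bal_mem_of_squeeze hA hI hbI h0b (bal_algebraMap_nonneg hA ht.le) hle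
    have h1I : (1 : A) ∈ I := by
      have := I.mul_mem_left (algebraMap ℝ A (r - m)⁻¹) htI
      rwa [← map_mul, inv_mul_cancel₀ ht.ne', map_one] at this
    exact hIp ((Ideal.eq_top_iff_one I).mpr h1I)
  refine ⟨⟨0, hne⟩, hbdd, ?_⟩
  set s : ℝ := sSup R with hs
  -- apply the archimedean ideal property with b = 1
  refine hIa (-(a - algebraMap ℝ A s)) 1 (fun n hn => ?_)
  have hn0 : (0 : ℝ) < n := by exact_mod_cast hn
  obtain ⟨r, hrR, hrlt⟩ := exists_lt_of_lt_csSup ⟨0, hne⟩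
    (show s - 1 / n < s by have := one_div_pos.mpr hn0; linarith)
  set c : A := -(a - algebraMap ℝ A r) with hc
  have hcI : c ⊔ 0 ∈ I := hrR
  have h0c : (0 : A) ≤ c ⊔ 0 := le_sup_right
  have hvI : n • (c ⊔ 0) ∈ I := by
    rw [nsmul_eq_mul]; exact I.mul_mem_left _ hcI
  have h0v : (0 : A) ≤ n • (c ⊔ 0) := bal_nsmul_nonneg hA h0c n
  -- key inequality: n • x - 1 ≤ n • c
  have hkey : n • (-(a - algebraMap ℝ A s)) - 1 ≤ n • c := by
    apply bal_le_of_sub_nonneg hA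
    have heq : n • c - (n • (-(a - algebraMap ℝ A s)) - 1) =
        algebraMap ℝ A (n * (r - s) + 1) := by
      rw [hc, map_add, map_mul, map_sub, map_natCast, map_one, nsmul_eq_mul, nsmul_eq_mul]
      ring
    rw [heq]
    apply bal_algebraMap_nonneg hA
    have h1 : s - r < 1 / n := by linarith
    have h2 : (n : ℝ) * (s - r) < (n : ℝ) * (1 / n) := mul_lt_mul_of_pos_left h1 hn0
    rw [mul_one_div, div_self hn0.ne'] at h2
    nlinarith
  have hle2 : n • (-(a - algebraMap ℝ A s)) - 1 ≤ n • (c ⊔ 0) :=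
    hkey.trans (bal_nsmul_le hA le_sup_left n)
  exact bal_mem_of_squeeze hA hI hvI h0v le_sup_right (sup_le hle2 h0v)
end

section
/- Let A be a bal-algebra and let X be the set of proper archimedean ℓ-ideals of A, ordered by inclusion and equipped with the Alexandroff topology whose open sets are the upward-closed subsets of X. For every I ∈ X, the set ↑I = {J ∈ X | I ⊆ J} is a regular open subset of X, i.e., int(cl(↑I)) = ↑I. -/
/-- The set of proper archimedean ℓ-ideals of `A`, ordered by inclusion. -/
abbrev ProperArchLIdeal (A : Type*) [CommRing A] [Lattice A] :=
  {I : Ideal A // IsLIdeal I ∧ IsArchLIdeal I ∧ I ≠ ⊤}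

noncomputable instance (A : Type*) [CommRing A] [Lattice A] :
    TopologicalSpace (ProperArchLIdeal A) := alexandroff _

section helpers
variable {A : Type*} [CommRing A] [Lattice A] [Algebra ℝ A] (hA : IsBal A)
include hA

theorem IsBal.addLeftMono : AddLeftMono A :=
  ⟨fun c a b h => by simpa [add_comm c] using hA.add_le_add_right a b h c⟩

theorem IsBal.addRightMono : AddRightMono A :=
  ⟨fun c a b h => hA.add_le_add_right a b h c⟩

theorem IsBal.e_nonneg {r : ℝ} (hr : 0 ≤ r) : 0 ≤ algebraMap ℝ A r := by
  simpa using hA.algebraMap_mono hr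

theorem IsBal.one_nonneg : (0 : A) ≤ 1 := by
  simpa using hA.e_nonneg (zero_le_one)

theorem IsBal.mul_le_mul_left {x y : A} (h : x ≤ y) {w : A} (hw : 0 ≤ w) :
    w * x ≤ w * y := by
  haveI := hA.addLeftMono
  have h2 := hA.mul_nonneg w (y - x) hw (by simpa using h)
  rw [mul_sub, sub_nonneg] at h2
  exact h2

theorem IsBal.smul_nonneg {r : ℝ} (hr : 0 ≤ r) {x : A} (hx : 0 ≤ x) : 0 ≤ r • x := by
  rw [Algebra.smul_def]
  exact hA.mul_nonneg _ _ (hA.e_nonneg hr) hx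

theorem IsBal.smul_mono {r : ℝ} (hr : 0 ≤ r) {x y : A} (h : x ≤ y) : r • x ≤ r • y := by
  haveI := hA.addLeftMono
  have h2 := hA.smul_nonneg hr (x := y - x) (by simpa using h)
  rw [smul_sub, sub_nonneg] at h2
  exact h2

theorem IsBal.abs_add_le (x y : A) : |x + y| ≤ |x| + |y| := by
  haveI := hA.addLeftMono
  haveI := hA.addRightMono
  refine sup_le (add_le_add (le_abs_self x) (le_abs_self y)) ?_
  rw [neg_add]
  exact add_le_add (neg_le_abs x) (neg_le_abs y)

theorem IsBal.abs_mul_le (x y : A) : |x * y| ≤ |x| * |y| := by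
  haveI := hA.addLeftMono
  haveI := hA.addRightMono
  have hx : x = x⁺ - x⁻ := (posPart_sub_negPart x).symm
  have hy : y = y⁺ - y⁻ := (posPart_sub_negPart y).symm
  have hax : |x| = x⁺ + x⁻ := (posPart_add_negPart x).symm
  have hay : |y| = y⁺ + y⁻ := (posPart_add_negPart y).symm
  have h1 : (0:A) ≤ x⁺ := posPart_nonneg x
  have h2 : (0:A) ≤ x⁻ := negPart_nonneg x
  have h3 : (0:A) ≤ y⁺ := posPart_nonneg y
  have h4 : (0:A) ≤ y⁻ := negPart_nonneg y
  refine sup_le ?_ ?_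
  · nth_rewrite 1 [hx, hy]; rw [hax, hay]
    have key : (x⁺ + x⁻) * (y⁺ + y⁻) - (x⁺ - x⁻) * (y⁺ - y⁻)
        = 2 * (x⁺ * y⁻ + x⁻ * y⁺) := by ring
    have hnn : (0:A) ≤ 2 * (x⁺ * y⁻ + x⁻ * y⁺) := by
      have := add_nonneg (hA.mul_nonneg _ _ h1 h4) (hA.mul_nonneg _ _ h2 h3)
      have h20 : (0:A) ≤ 2 := by
        have h := add_nonneg hA.one_nonneg hA.one_nonneg; rwa [one_add_one_eq_two] at h
      exact hA.mul_nonneg _ _ h20 this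
    rw [← sub_nonneg, key]
    exact hnn
  · nth_rewrite 1 [hx, hy]; rw [hax, hay]
    have key : (x⁺ + x⁻) * (y⁺ + y⁻) - -((x⁺ - x⁻) * (y⁺ - y⁻))
        = 2 * (x⁺ * y⁺ + x⁻ * y⁻) := by ring
    have hnn : (0:A) ≤ 2 * (x⁺ * y⁺ + x⁻ * y⁻) := by
      have := add_nonneg (hA.mul_nonneg _ _ h1 h3) (hA.mul_nonneg _ _ h2 h4)
      have h20 : (0:A) ≤ 2 := by
        have h := add_nonneg hA.one_nonneg hA.one_nonneg; rwa [one_add_one_eq_two] at h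
      exact hA.mul_nonneg _ _ h20 this
    rw [← sub_nonneg, key]
    exact hnn

theorem IsBal.inf_add_le {x y z : A} (hx : 0 ≤ x) (hy : 0 ≤ y) (_hz : 0 ≤ z) :
    x ⊓ (y + z) ≤ x ⊓ y + x ⊓ z := by
  haveI := hA.addLeftMono
  haveI := hA.addRightMono
  have h1 : x ⊓ y + x ⊓ z = (x ⊓ y + x) ⊓ (x ⊓ y + z) := add_inf x z (x ⊓ y)
  rw [h1]
  refine le_inf ?_ ?_
  · calc x ⊓ (y + z) ≤ x := inf_le_left
      _ = 0 + x := (zero_add x).symm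
      _ ≤ x ⊓ y + x := _root_.add_le_add_left (le_inf hx hy) x
  · have h2 : x ⊓ y + z = (x + z) ⊓ (y + z) := by
      rw [add_comm, add_inf, add_comm z x, add_comm z y]
    rw [h2]
    exact le_inf (le_trans inf_le_left (le_add_of_nonneg_right _hz)) inf_le_right

theorem IsBal.nsmul_nonneg {x : A} (hx : 0 ≤ x) (n : ℕ) : 0 ≤ n • x := by
  haveI := hA.addLeftMono
  induction n with
  | zero => simp
  | succ k ih => rw [succ_nsmul]; exact add_nonneg ih hx

theorem IsBal.inf_nsmul_le {x y : A} (hx : 0 ≤ x) (hy : 0 ≤ y) (n : ℕ) :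
    x ⊓ (n • y) ≤ n • (x ⊓ y) := by
  haveI := hA.addLeftMono
  haveI := hA.addRightMono
  induction n with
  | zero => simpa using inf_le_right
  | succ n ih =>
    have hny : 0 ≤ n • y := hA.nsmul_nonneg hy n
    calc x ⊓ ((n+1) • y) = x ⊓ (n • y + y) := by rw [succ_nsmul]
      _ ≤ x ⊓ (n • y) + x ⊓ y := hA.inf_add_le hx hny hy
      _ ≤ n • (x ⊓ y) + x ⊓ y := _root_.add_le_add_left ih _
      _ = (n+1) • (x ⊓ y) := (succ_nsmul _ n).symm

theorem IsBal.posPart_nsmul (x : A) (n : ℕ) : (n • x)⁺ ≤ n • x⁺ := by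
  haveI := hA.addLeftMono
  haveI := hA.addRightMono
  exact sup_le (nsmul_le_nsmul_right (le_posPart x) n) (hA.nsmul_nonneg (posPart_nonneg x) n)

theorem IsBal.le_unit (x : A) : ∃ n : ℕ, 1 ≤ n ∧ x ≤ algebraMap ℝ A n := by
  obtain ⟨n, hn1, hn⟩ := hA.strong_unit x
  refine ⟨n, hn1, ?_⟩
  rw [map_natCast]
  rwa [nsmul_eq_mul, mul_one] at hn

omit hA

theorem lideal_mem {J : Ideal A} (hJ : IsLIdeal J) {x y : A} (h : |x| ≤ |y|)
    (hy : y ∈ J) : x ∈ J :=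
  hJ x y hy h

include hA

theorem IsBal.lideal_abs_mem {J : Ideal A} (hJ : IsLIdeal J) {y : A} (hy : y ∈ J) :
    |y| ∈ J := by
  haveI := hA.addLeftMono
  haveI := hA.addRightMono
  exact hJ _ y hy (le_of_eq (abs_abs y))

theorem IsBal.lideal_mem_of_nonneg_le {J : Ideal A} (hJ : IsLIdeal J) {x y : A}
    (hx : 0 ≤ x) (h : x ≤ y) (hy : y ∈ J) : x ∈ J := by
  haveI := hA.addLeftMono
  haveI := hA.addRightMono
  refine hJ x y hy ?_
  calc x ⊔ -x = |x| := rfl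
    _ = x := abs_of_nonneg hx
    _ ≤ y := h
    _ ≤ |y| := le_abs_self y
    _ = y ⊔ -y := rfl

theorem IsBal.separation {J : Ideal A} (hJl : IsLIdeal J) (hJa : IsArchLIdeal J)
    {a : A} (ha0 : 0 ≤ a) (haJ : a ∉ J) :
    ∃ (K : Ideal A) (ε : ℝ), 0 < ε ∧ IsLIdeal K ∧ IsArchLIdeal K ∧ K ≠ ⊤ ∧ J ≤ K ∧
      ((algebraMap ℝ A ε - a) ⊔ 0) ∈ K := by
  haveI := hA.addLeftMono
  haveI := hA.addRightMono
  set e := algebraMap ℝ A with he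
  -- Step 1: find n₀
  have key : ∃ n₀ : ℕ, 1 ≤ n₀ ∧ (n₀ • a - 1) ⊔ 0 ∉ J := by
    by_contra hc
    push_neg at hc
    have h := hJa a 1 hc
    rw [sup_eq_left.2 ha0] at h
    exact haJ h
  obtain ⟨n₀, hn₀1, hn₀J⟩ := key
  have hn₀pos : (0:ℝ) < n₀ := by exact_mod_cast hn₀1
  set ε : ℝ := (n₀ : ℝ)⁻¹ with hεdef
  have hε : 0 < ε := by positivity
  set c : A := (e ε - a) ⊔ 0 with hc_def
  set d : A := (a - e ε) ⊔ 0 with hd_def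
  have hc_pp : c = (e ε - a)⁺ := rfl
  have hd_np : d = (e ε - a)⁻ := by rw [negPart_def, neg_sub]
  have c0 : (0:A) ≤ c := le_sup_right
  have d0 : (0:A) ≤ d := le_sup_right
  have hcd : c ⊓ d = 0 := by rw [hc_pp, hd_np]; exact posPart_inf_negPart_eq_zero _
  have hsmul_eps : n₀ • (e ε) = 1 := by
    rw [← map_nsmul, nsmul_eq_mul, hεdef, mul_inv_cancel₀ (ne_of_gt hn₀pos), map_one]
  -- d ∉ J
  have hd_notJ : d ∉ J := by
    intro hdJ
    have h1 : (n₀ • a - 1) ⊔ 0 ≤ n₀ • d :=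
      calc (n₀ • a - 1) ⊔ 0 = (n₀ • (a - e ε))⁺ := by rw [smul_sub, hsmul_eps]; rfl
        _ ≤ n₀ • (a - e ε)⁺ := hA.posPart_nsmul _ n₀
        _ = n₀ • d := rfl
    have h2 : n₀ • d ∈ J := by rw [nsmul_eq_mul]; exact J.mul_mem_left _ hdJ
    exact hn₀J (hA.lideal_mem_of_nonneg_le hJl le_sup_right h1 h2)
  -- u
  set u : A := d ⊓ 1 with hu_def
  have hu0 : (0:A) ≤ u := le_inf d0 hA.one_nonneg
  have hu1 : u ≤ 1 := inf_le_right
  have huc : u ⊓ c = 0 := by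
    refine le_antisymm ?_ (le_inf hu0 c0)
    calc u ⊓ c ≤ d ⊓ c := inf_le_inf_right c inf_le_left
      _ = c ⊓ d := inf_comm d c
      _ = 0 := hcd
  have humc : ∀ m : ℕ, u ⊓ (m • c) = 0 := by
    intro m
    refine le_antisymm ?_ (le_inf hu0 (hA.nsmul_nonneg c0 m))
    calc u ⊓ (m • c) ≤ m • (u ⊓ c) := hA.inf_nsmul_le hu0 c0 m
      _ = 0 := by rw [huc, smul_zero]
  have hu_notJ : u ∉ J := by
    intro huJ
    obtain ⟨N, hN1, hdN⟩ := hA.strong_unit d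
    have h2 : d ≤ N • u :=
      calc d = d ⊓ (N • (1:A)) := (inf_eq_left.2 hdN).symm
        _ ≤ N • (d ⊓ 1) := hA.inf_nsmul_le d0 hA.one_nonneg N
    have h3 : N • u ∈ J := by rw [nsmul_eq_mul]; exact J.mul_mem_left _ huJ
    exact hd_notJ (hA.lideal_mem_of_nonneg_le hJl d0 h2 h3)
  -- the ideal K
  set Kc : Set A := {x | ∀ δ : ℝ, 0 < δ → ∃ j ∈ J, 0 ≤ j ∧ ∃ m : ℕ, |x| ≤ j + m • c + e δ}
    with hKc_def
  have habs0 : |(0:A)| = 0 := by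
    show (0:A) ⊔ -0 = 0
    rw [neg_zero, sup_idem]
  have K_zero : (0:A) ∈ Kc := by
    intro δ hδ
    exact ⟨0, J.zero_mem, le_refl 0, 0, by
      rw [habs0, zero_smul, add_zero, zero_add]; exact hA.e_nonneg hδ.le⟩
  have K_add : ∀ {x y : A}, x ∈ Kc → y ∈ Kc → x + y ∈ Kc := by
    intro x y hx hy δ hδ
    obtain ⟨j₁, hj₁J, hj₁0, m₁, hm₁⟩ := hx (δ/2) (by positivity)
    obtain ⟨j₂, hj₂J, hj₂0, m₂, hm₂⟩ := hy (δ/2) (by positivity)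
    refine ⟨j₁ + j₂, J.add_mem hj₁J hj₂J, add_nonneg hj₁0 hj₂0, m₁ + m₂, ?_⟩
    have hhalf : e (δ/2) + e (δ/2) = e δ := by rw [← map_add]; norm_num
    calc |x + y| ≤ |x| + |y| := hA.abs_add_le x y
      _ ≤ (j₁ + m₁ • c + e (δ/2)) + (j₂ + m₂ • c + e (δ/2)) := add_le_add hm₁ hm₂
      _ = (j₁ + j₂) + (m₁ + m₂) • c + e δ := by rw [add_nsmul, ← hhalf]; abel
  have K_smul : ∀ (r : A) {x : A}, x ∈ Kc → r * x ∈ Kc := by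
    intro r x hx δ hδ
    obtain ⟨N, hN1, hrN⟩ := hA.le_unit |r|
    have hNpos : (0:ℝ) < N := by exact_mod_cast hN1
    obtain ⟨j, hjJ, hj0, m, hm⟩ := hx (δ/N) (by positivity)
    have heN0 : (0:A) ≤ e N := hA.e_nonneg (by positivity)
    refine ⟨e N * j, J.mul_mem_left _ hjJ, hA.mul_nonneg _ _ heN0 hj0, N * m, ?_⟩
    have step1 : |r| * |x| ≤ e N * |x| := by
      have h := hA.mul_nonneg (e N - |r|) |x| (sub_nonneg.2 hrN) (abs_nonneg x)
      rwa [sub_mul, sub_nonneg] at h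
    have step2 : e N * (m • c) = (N * m) • c := by
      rw [nsmul_eq_mul, nsmul_eq_mul, he, map_natCast]
      push_cast
      ring
    have step3 : e N * e (δ/N) = e δ := by
      rw [← map_mul]; congr 1; field_simp
    calc |r * x| ≤ |r| * |x| := hA.abs_mul_le r x
      _ ≤ e N * |x| := step1
      _ ≤ e N * (j + m • c + e (δ/N)) := hA.mul_le_mul_left hm heN0
      _ = e N * j + (N * m) • c + e δ := by rw [mul_add, mul_add, step2, step3]
  set K : Ideal A :=
    { carrier := Kc
      add_mem' := fun hx hy => K_add hx hy
      zero_mem' := K_zero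
      smul_mem' := fun r x hx => K_smul r hx } with hK_def
  have hmemK : ∀ {x : A}, x ∈ K ↔ x ∈ Kc := fun {x} => Iff.rfl
  -- J ≤ K
  have hJK : J ≤ K := by
    intro j hj
    rw [hmemK]
    intro δ hδ
    exact ⟨|j|, hA.lideal_abs_mem hJl hj, abs_nonneg j, 0, by
      rw [zero_smul, add_zero]
      exact le_add_of_nonneg_right (hA.e_nonneg hδ.le)⟩
  -- c ∈ K
  have hcK : c ∈ K := by
    rw [hmemK]
    intro δ hδ
    refine ⟨0, J.zero_mem, le_refl 0, 1, ?_⟩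
    rw [abs_of_nonneg c0, zero_add, one_smul]
    exact le_add_of_nonneg_right (hA.e_nonneg hδ.le)
  -- IsLIdeal K
  have hKl : IsLIdeal K := by
    intro x b hb hle
    rw [hmemK] at hb ⊢
    intro δ hδ
    obtain ⟨j, hjJ, hj0, m, hm⟩ := hb δ hδ
    exact ⟨j, hjJ, hj0, m, le_trans hle hm⟩
  -- IsArchLIdeal K
  have hKa : IsArchLIdeal K := by
    intro x b hxb
    rw [hmemK]
    intro δ hδ
    obtain ⟨Nb, hNb1, hbN⟩ := hA.le_unit b
    have hNbpos : (0:ℝ) < Nb := by exact_mod_cast hNb1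
    obtain ⟨n, hngt⟩ := exists_nat_gt (2 * Nb / δ)
    have hnpos : (0:ℝ) < n := lt_trans (by positivity) hngt
    have hn1 : 1 ≤ n := by exact_mod_cast Nat.one_le_iff_ne_zero.2 (by
      intro h; rw [h] at hnpos; simp at hnpos)
    set lam : ℝ := (n : ℝ)⁻¹ with hlam_def
    have hlam0 : 0 ≤ lam := by positivity
    have hlam1 : lam ≤ 1 := by
      rw [hlam_def]
      rw [inv_le_one_iff₀]
      right; exact_mod_cast hn1
    have hδ'' : 0 < (n:ℝ) * (δ/2) := by positivity
    have hmem := (hxb n hn1) ((n:ℝ) * (δ/2)) hδ''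
    obtain ⟨j, hjJ, hj0, m, hm⟩ := hmem
    rw [abs_of_nonneg (le_sup_right : (0:A) ≤ _)] at hm
    -- key1
    have hx_eq : x = lam • ((n • x : A) - b) + lam • b := by
      rw [← smul_add, sub_add_cancel, ← Nat.cast_smul_eq_nsmul ℝ n x, smul_smul,
        inv_mul_cancel₀ (ne_of_gt hnpos), one_smul]
    have key1 : x ⊔ 0 ≤ lam • (((n • x : A) - b) ⊔ 0) + lam • (b ⊔ 0) := by
      refine sup_le ?_ (add_nonneg (hA.smul_nonneg hlam0 le_sup_right)
        (hA.smul_nonneg hlam0 le_sup_right))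
      calc x = lam • ((n • x : A) - b) + lam • b := hx_eq
        _ ≤ lam • (((n • x : A) - b) ⊔ 0) + lam • (b ⊔ 0) :=
          add_le_add (hA.smul_mono hlam0 le_sup_left) (hA.smul_mono hlam0 le_sup_left)
    -- key2
    have key2 : lam • (((n • x : A) - b) ⊔ 0) ≤ e lam * j + m • c + e (δ/2) := by
      have h1 : lam • (((n • x : A) - b) ⊔ 0) ≤ lam • (j + m • c + e ((n:ℝ) * (δ/2))) :=
        hA.smul_mono hlam0 hm
      have h2 : lam • (j + m • c + e ((n:ℝ) * (δ/2)))
          = lam • j + lam • (m • c) + lam • e ((n:ℝ) * (δ/2)) := by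
        rw [smul_add, smul_add]
      have h3 : lam • j = e lam * j := Algebra.smul_def lam j
      have h4 : lam • (m • c) ≤ m • c := by
        have h := hA.smul_nonneg (r := 1 - lam) (by linarith) (hA.nsmul_nonneg c0 m)
        rwa [sub_smul, one_smul, sub_nonneg] at h
      have h5 : lam • e ((n:ℝ) * (δ/2)) = e (δ/2) := by
        rw [Algebra.smul_def, ← map_mul]
        congr 1
        rw [hlam_def, inv_mul_cancel_left₀ (ne_of_gt hnpos)]
      calc lam • (((n • x : A) - b) ⊔ 0) ≤ lam • (j + m • c + e ((n:ℝ) * (δ/2))) := h1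
        _ = lam • j + lam • (m • c) + lam • e ((n:ℝ) * (δ/2)) := h2
        _ ≤ e lam * j + m • c + e (δ/2) := by
            rw [h3, h5]
            exact add_le_add (add_le_add (le_refl _) h4) (le_refl _)
    -- key3
    have key3 : lam • (b ⊔ 0) ≤ e (δ/2) := by
      have hb0 : b ⊔ 0 ≤ e Nb := sup_le hbN (hA.e_nonneg hNbpos.le)
      have h6 : lam • (b ⊔ 0) ≤ lam • e Nb := hA.smul_mono hlam0 hb0
      have h7 : lam • e Nb = e (lam * Nb) := by rw [Algebra.smul_def, ← map_mul]
      have h8 : lam * Nb ≤ δ/2 := by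
        rw [hlam_def, inv_mul_le_iff₀ hnpos]
        rw [div_lt_iff₀ hδ] at hngt
        nlinarith
      calc lam • (b ⊔ 0) ≤ lam • e Nb := h6
        _ = e (lam * Nb) := h7
        _ ≤ e (δ/2) := hA.algebraMap_mono h8
    refine ⟨e lam * j, J.mul_mem_left _ hjJ,
      hA.mul_nonneg _ _ (hA.e_nonneg hlam0) hj0, m, ?_⟩
    have hhalf : e (δ/2) + e (δ/2) = e δ := by rw [← map_add]; norm_num
    rw [abs_of_nonneg (le_sup_right : (0:A) ≤ _)]
    calc x ⊔ 0 ≤ lam • (((n • x : A) - b) ⊔ 0) + lam • (b ⊔ 0) := key1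
      _ ≤ (e lam * j + m • c + e (δ/2)) + e (δ/2) := add_le_add key2 key3
      _ = e lam * j + m • c + e δ := by rw [add_assoc, hhalf]
  -- 1 ∉ K
  have hone_notK : (1:A) ∉ K := by
    intro h1K
    rw [hmemK] at h1K
    have claim : ∀ δ : ℝ, 0 < δ → δ < 1 → (u - e δ) ⊔ 0 ∈ J := by
      intro δ hδ hδ1
      obtain ⟨j, hjJ, hj0, m, hle⟩ := h1K δ hδ
      rw [abs_of_nonneg hA.one_nonneg] at hle
      have h2 : (1:A) - e δ ≤ j + m • c := by
        rw [sub_le_iff_le_add]; exact hle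
      have ht0 : (0:A) ≤ u ⊓ (1 - e δ) := by
        refine le_inf hu0 ?_
        rw [sub_nonneg]
        calc e δ ≤ e 1 := hA.algebraMap_mono hδ1.le
          _ = 1 := map_one e
      have htj : u ⊓ (1 - e δ) ≤ j :=
        calc u ⊓ (1 - e δ) ≤ u ⊓ (j + m • c) := inf_le_inf_left u h2
          _ ≤ u ⊓ j + u ⊓ (m • c) := hA.inf_add_le hu0 hj0 (hA.nsmul_nonneg c0 m)
          _ = u ⊓ j := by rw [humc m, add_zero]
          _ ≤ j := inf_le_right
      have htJ : u ⊓ (1 - e δ) ∈ J := hA.lideal_mem_of_nonneg_le hJl ht0 htj hjJ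
      have h3 : (u - e δ) ⊔ 0 ≤ u ⊓ (1 - e δ) := by
        refine sup_le (le_inf ?_ ?_) ht0
        · exact sub_le_self u (hA.e_nonneg hδ.le)
        · exact sub_le_sub_right hu1 _
      exact hA.lideal_mem_of_nonneg_le hJl le_sup_right h3 htJ
    have harch : u ⊔ 0 ∈ J := by
      refine hJa u 1 ?_
      intro n hn1
      have hδpos : (0:ℝ) < 1/(n+1) := by positivity
      have hδlt1 : (1:ℝ)/(n+1) < 1 := by
        rw [div_lt_one (by positivity)]
        have : (1:ℝ) ≤ n := by exact_mod_cast hn1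
        linarith
      have hjm := claim (1/((n:ℝ)+1)) hδpos hδlt1
      have hsm : n • ((u - e (1/((n:ℝ)+1))) ⊔ 0) ∈ J := by
        rw [nsmul_eq_mul]; exact J.mul_mem_left _ hjm
      have h5 : n • (e (1/((n:ℝ)+1))) ≤ 1 := by
        rw [← map_nsmul, nsmul_eq_mul]
        have h6 : (n:ℝ) * (1/((n:ℝ)+1)) ≤ 1 := by
          rw [mul_one_div, div_le_one (by positivity)]
          linarith
        calc e ((n:ℝ) * (1/((n:ℝ)+1))) ≤ e 1 := hA.algebraMap_mono h6
          _ = 1 := map_one e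
      have h4a : (n • u - 1) ⊔ 0 ≤ (n • (u - e (1/((n:ℝ)+1)))) ⊔ 0 := by
        refine sup_le_sup_right ?_ 0
        rw [smul_sub]
        exact sub_le_sub_left h5 _
      have h4 : (n • u - 1) ⊔ 0 ≤ n • ((u - e (1/((n:ℝ)+1))) ⊔ 0) :=
        le_trans h4a (hA.posPart_nsmul _ n)
      exact hA.lideal_mem_of_nonneg_le hJl le_sup_right h4 hsm
    rw [sup_eq_left.2 hu0] at harch
    exact hu_notJ harch
  exact ⟨K, ε, hε, hKl, hKa, (Ideal.ne_top_iff_one K).2 hone_notK, hJK, hcK⟩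

end helpers

/-- In the Alexandroff space of proper archimedean ℓ-ideals of a bal-algebra `A`,
each principal upper set `↑I = {J | I ⊆ J}` is regular open. -/
theorem Ici_regularOpen {A : Type*} [CommRing A] [Lattice A] [Algebra ℝ A]
    (hA : IsBal A) (I : ProperArchLIdeal A) :
    interior (closure (Set.Ici I)) = Set.Ici I := by
  haveI := hA.addLeftMono
  haveI := hA.addRightMono
  apply subset_antisymm
  · intro J hJint
    by_contra hIJ
    rw [Set.mem_Ici] at hIJ
    have hnotle : ¬ I.1 ≤ J.1 := hIJ
    obtain ⟨a, haI, haJ⟩ := SetLike.not_le_iff_exists.1 hnotle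
    have ha0 : (0:A) ≤ |a| := abs_nonneg a
    have haI' : |a| ∈ I.1 := hA.lideal_abs_mem I.2.1 haI
    have haJ' : |a| ∉ J.1 := by
      intro h
      exact haJ (J.2.1 a |a| h (le_of_eq (abs_abs a).symm))
    obtain ⟨K, ε, hε, hKl, hKa, hKtop, hJK, hcK⟩ :=
      hA.separation J.2.1 J.2.2.1 ha0 haJ'
    set K' : ProperArchLIdeal A := ⟨K, hKl, hKa, hKtop⟩ with hK'def
    have hJK' : J ≤ K' := hJK
    have hK'int : K' ∈ interior (closure (Set.Ici I)) := by
      have hup : IsUpperSet (interior (closure (Set.Ici I))) := (isOpen_interior (s := closure (Set.Ici I)))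
      exact hup hJK' hJint
    have hK'cl : K' ∈ closure (Set.Ici I) := interior_subset hK'int
    have hlower : IsClosed (↑(lowerClosure (Set.Ici I)) : Set (ProperArchLIdeal A)) := by
      rw [← isOpen_compl_iff]
      exact (lowerClosure (Set.Ici I)).lower.compl
    have hsub : closure (Set.Ici I) ⊆ ↑(lowerClosure (Set.Ici I)) :=
      closure_minimal subset_lowerClosure hlower
    obtain ⟨M, hIM, hKM⟩ := hsub hK'cl
    rw [Set.mem_Ici] at hIM
    have hIM' : I.1 ≤ M.1 := hIM
    have hKM' : K ≤ M.1 := hKM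
    have hmem1 : |a| + ((algebraMap ℝ A ε - |a|) ⊔ 0) ∈ M.1 :=
      add_mem (hIM' haI') (hKM' hcK)
    have hle1 : algebraMap ℝ A ε ≤ |a| + ((algebraMap ℝ A ε - |a|) ⊔ 0) :=
      sub_le_iff_le_add'.1 le_sup_left
    have hmul : algebraMap ℝ A (ε⁻¹) * (|a| + ((algebraMap ℝ A ε - |a|) ⊔ 0)) ∈ M.1 :=
      M.1.mul_mem_left _ hmem1
    have h1le : (1:A) ≤ algebraMap ℝ A (ε⁻¹) * (|a| + ((algebraMap ℝ A ε - |a|) ⊔ 0)) := by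
      calc (1:A) = algebraMap ℝ A (ε⁻¹) * algebraMap ℝ A ε := by
            rw [← map_mul, inv_mul_cancel₀ (ne_of_gt hε), map_one]
        _ ≤ _ := hA.mul_le_mul_left hle1 (hA.e_nonneg (by positivity))
    have h1M : (1:A) ∈ M.1 :=
      hA.lideal_mem_of_nonneg_le M.2.1 hA.one_nonneg h1le hmul
    exact M.2.2.2 (M.1.eq_top_iff_one.2 h1M)
  · exact interior_maximal subset_closure (isUpperSet_Ici I : IsOpen (Set.Ici I))
end

section
/- Let A be a bal-algebra and let X be the set of proper archimedean ℓ-ideals of A, ordered by inclusion and equipped with the Alexandroff topology whose open sets are the upward-closed subsets of X. For I ∈ X, let U_I = {J ∈ X | ar(I + J) = A} (i.e., the join of I and J in the lattice of archimedean ℓ-ideals is A). Then U_I is a regular open subset of X; moreover ↑I ∩ U_I = ∅, and every regular open subset V of X with ↑I ∩ V = ∅ satisfies V ⊆ U_I. Hence U_I is the complement of ↑I = {J ∈ X | I ⊆ J} in the boolean algebra of regular open subsets of X. -/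
/-- `U_I = {J | ar(I + J) = A}`: the proper archimedean ℓ-ideals whose join with
`I` in the lattice of archimedean ℓ-ideals is all of `A`. -/
def complUpperSet {A : Type*} [CommRing A] [Lattice A] (I : ProperArchLIdeal A) :
    Set (ProperArchLIdeal A) :=
  {J : ProperArchLIdeal A | archHull ((I.1 + J.1 : Ideal A) : Set A) = ⊤}

/-- In the Alexandroff space of proper archimedean ℓ-ideals of a bal-algebra `A`,
the set `U_I = {J | ar(I + J) = A}` is regular open, is disjoint from
`↑I = {J | I ⊆ J}`, and contains every regular open set disjoint from `↑I`; hence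
`U_I` is the complement of `↑I` in the boolean algebra of regular open sets. -/
theorem complUpperSet_is_regular_complement {A : Type*} [CommRing A] [Lattice A]
    [Algebra ℝ A] (hA : IsBal A) (I : ProperArchLIdeal A) :
    interior (closure (complUpperSet I)) = complUpperSet I ∧
    Set.Ici I ∩ complUpperSet I = ∅ ∧
    (∀ V : Set (ProperArchLIdeal A), interior (closure V) = V →
      Set.Ici I ∩ V = ∅ → V ⊆ complUpperSet I) := by
  classical
  -- basic facts about archHull
  have subset_archHull : ∀ S : Set A, S ⊆ ↑(archHull S) := fun S x hx =>
    Submodule.mem_sInf.mpr fun _ hI => hI.2.2 hx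
  have archHull_le : ∀ (S : Set A) (K : Ideal A), IsLIdeal K → IsArchLIdeal K →
      S ⊆ ↑K → archHull S ≤ K := fun S K h1 h2 h3 => sInf_le ⟨h1, h2, h3⟩
  have archHull_mono : ∀ S T : Set A, S ⊆ T → archHull S ≤ archHull T :=
    fun S T h => sInf_le_sInf (fun K hK => ⟨hK.1, hK.2.1, h.trans hK.2.2⟩)
  have isL : ∀ S : Set A, IsLIdeal (archHull S) := fun S a b hb hab =>
    Submodule.mem_sInf.mpr fun K hK => hK.1 a b (Submodule.mem_sInf.mp hb K hK) hab
  have isArch : ∀ S : Set A, IsArchLIdeal (archHull S) := fun S a b h =>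
    Submodule.mem_sInf.mpr fun K hK =>
      hK.2.1 a b fun n hn => Submodule.mem_sInf.mp (h n hn) K hK
  -- key fact: no L above I belongs to complUpperSet I
  have key : ∀ L : ProperArchLIdeal A, I.1 ≤ L.1 → L ∉ complUpperSet I := by
    intro L hIL hL
    have hsub : ((I.1 + L.1 : Ideal A) : Set A) ⊆ ↑L.1 := by
      have : I.1 + L.1 ≤ L.1 := by
        rw [Submodule.add_eq_sup]; exact sup_le hIL le_rfl
      exact this
    have hle := archHull_le _ _ L.2.1 L.2.2.1 hsub
    rw [hL] at hle
    exact L.2.2.2 (top_le_iff.mp hle)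
  have hopenU : IsOpen (complUpperSet I) := by
    show IsUpperSet (complUpperSet I)
    intro J K hJK hJ
    have h1 : archHull ((I.1 + J.1 : Ideal A) : Set A) ≤
        archHull ((I.1 + K.1 : Ideal A) : Set A) := by
      apply archHull_mono
      have : I.1 + J.1 ≤ I.1 + K.1 := by
        rw [Submodule.add_eq_sup, Submodule.add_eq_sup]
        exact sup_le_sup_left hJK _
      exact this
    rw [hJ] at h1
    exact top_le_iff.mp h1
  -- the extension argument
  have ext : ∀ (V : Set (ProperArchLIdeal A)) (J : ProperArchLIdeal A),
      J ∈ interior (closure V) → archHull ((I.1 + J.1 : Ideal A) : Set A) ≠ ⊤ →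
      ∃ L : ProperArchLIdeal A, I.1 ≤ L.1 ∧ L ∈ V := by
    intro V J hJ hne
    set K0 := archHull ((I.1 + J.1 : Ideal A) : Set A) with hK0
    refine ?_
    have hIK : I.1 ≤ K0 := by
      intro x hx
      exact subset_archHull _ (by
        rw [Submodule.add_eq_sup]
        exact (le_sup_left : I.1 ≤ I.1 ⊔ J.1) hx)
    have hJK : J.1 ≤ K0 := by
      intro x hx
      exact subset_archHull _ (by
        rw [Submodule.add_eq_sup]
        exact (le_sup_right : J.1 ≤ I.1 ⊔ J.1) hx)
    set K : ProperArchLIdeal A := ⟨K0, isL _, isArch _, hne⟩ with hK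
    have hJleK : J ≤ K := hJK
    obtain ⟨W, hWsub, hWopen, hJW⟩ := mem_interior.mp hJ
    have hWupper : IsUpperSet W := hWopen
    have hKW : K ∈ W := hWupper hJleK hJW
    have hKcl : K ∈ closure V := hWsub hKW
    have hIciK : IsOpen (Set.Ici K) := (isUpperSet_Ici K : IsUpperSet (Set.Ici K))
    obtain ⟨L, hL1, hL2⟩ := mem_closure_iff.mp hKcl (Set.Ici K) hIciK Set.self_mem_Ici
    exact ⟨L, hIK.trans hL1, hL2⟩
  refine ⟨?_, ?_, ?_⟩
  · apply Set.Subset.antisymm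
    · intro J hJ
      by_contra hne
      obtain ⟨L, hL1, hL2⟩ := ext (complUpperSet I) J hJ hne
      exact key L hL1 hL2
    · exact interior_maximal subset_closure hopenU
  · ext J
    simp only [Set.mem_inter_iff, Set.mem_Ici, Set.mem_empty_iff_false, iff_false, not_and]
    intro hIJ
    exact key J hIJ
  · intro V hV hdisj J hJV
    by_contra hne
    obtain ⟨L, hL1, hL2⟩ := ext V J (by rw [hV]; exact hJV) hne
    have : L ∈ Set.Ici I ∩ V := ⟨hL1, hL2⟩
    rw [hdisj] at this
    exact this
end
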